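/- arXiv:2004.09016 — 7 statements merged into one kernel-verified Lean document; each statement's English description precedes it below -/
import Mathlib

section
/- Let n ≥ 1 and let a_1, …, a_n and r_1, …, r_n be positive integers such that 1 ≤ r_j < a_j and gcd(r_j, a_j) = 1 for every j. Then the following are equivalent: (i) a_1, …, a_n are not pairwise relatively prime (i.e. there exist indices s ≠ t with gcd(a_s, a_t) > 1); (ii) there exists an integer k such that a_j ∤ k·r_j for every j and, writing ρ_j for the unique integer with 1 ≤ ρ_j < a_j and ρ_j ≡ k·r_j (mod a_j), one has the strict inequality lcm(a_1, …, a_n) · (ρ_1 · ρ_2 ⋯ ρ_n) < a_1 · a_2 ⋯ a_n. -/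
private lemma crt2 (m n a b : ℤ) (h : (Int.gcd m n : ℤ) ∣ (b - a)) :
    ∃ x : ℤ, m ∣ (x - a) ∧ n ∣ (x - b) := by
  obtain ⟨w, hw⟩ := h
  have hg : (Int.gcd m n : ℤ) = m * Int.gcdA m n + n * Int.gcdB m n := Int.gcd_eq_gcd_ab m n
  refine ⟨a + m * Int.gcdA m n * w, ⟨Int.gcdA m n * w, by ring⟩, ⟨-(Int.gcdB m n) * w, ?_⟩⟩
  linear_combination -hw - w * hg


/-- lcm of pairwise coprime values equals the product. -/
private lemma lcm_eq_prod {n : ℕ} (a : Fin n → ℕ) (s : Finset (Fin n))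
    (hcop : ∀ x ∈ s, ∀ y ∈ s, x ≠ y → Nat.gcd (a x) (a y) = 1) :
    s.lcm a = ∏ j ∈ s, a j := by
  induction s using Finset.induction_on with
  | empty => simp
  | @insert i s' hi ih =>
    have hco : Nat.Coprime (a i) (∏ j ∈ s', a j) := by
      apply Nat.Coprime.prod_right
      intro j hj
      exact hcop i (Finset.mem_insert_self i s') j (Finset.mem_insert_of_mem hj)
        (fun he : i = j => hi (he ▸ hj))
    have hlcmdvd : s'.lcm a ∣ ∏ j ∈ s', a j :=
      Finset.lcm_dvd fun b hb => Finset.dvd_prod_of_mem a hb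
    have hco2 : Nat.Coprime (a i) (s'.lcm a) := Nat.Coprime.coprime_dvd_right hlcmdvd hco
    rw [Finset.lcm_insert, lcm_eq_nat_lcm, Finset.prod_insert hi, ← ih (fun x hx y hy hxy =>
      hcop x (Finset.mem_insert_of_mem hx) y (Finset.mem_insert_of_mem hy) hxy)]
    exact Nat.Coprime.lcm_eq_mul hco2

/-- Core extension lemma. -/
private lemma ext_lemma {n : ℕ} (a r : Fin n → ℕ)
    (ha : ∀ j, 0 < a j) (hcop : ∀ j, Nat.gcd (r j) (a j) = 1)
    (M : ℕ) (hM : 0 < M) (k₀ : ℤ) (N : Finset (Fin n))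
    (hw : ∀ j ∈ N, ∃ q : ℕ, 1 < q ∧ q ∣ M ∧ q ∣ a j ∧ IsCoprime (q : ℤ) (k₀ * (r j : ℤ))) :
    ∃ (k : ℤ) (ρ : Fin n → ℕ),
      ((M : ℤ) ∣ (k - k₀)) ∧
      (∀ j ∈ N, 1 ≤ ρ j ∧ ρ j < a j ∧ (((a j : ℕ) : ℤ) ∣ (k * (r j : ℤ) - (ρ j : ℤ)))) ∧
      Nat.lcm M (N.lcm a) * ∏ j ∈ N, ρ j ≤ M * ∏ j ∈ N, a j ∧
      (N.Nonempty → Nat.lcm M (N.lcm a) * ∏ j ∈ N, ρ j < M * ∏ j ∈ N, a j) := by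
  revert hw
  induction N using Finset.induction_on with
  | empty =>
      intro _
      exact ⟨k₀, fun _ => 1, dvd_sub_comm.mp ⟨0, by ring⟩, by simp, by simp, by simp⟩
  | @insert j N' hjN' ih =>
    intro hw
    obtain ⟨k', ρ', hk'M, hρ', hbound, _⟩ := ih (fun j hj => hw j (Finset.mem_insert_of_mem hj))
    set Λ : ℕ := Nat.lcm M (N'.lcm a) with hΛdef
    have hNlcm : 0 < N'.lcm a := Nat.pos_of_ne_zero (by
      intro h0
      obtain ⟨x, hx, hx0⟩ := Set.mem_image _ _ _ |>.mp (Finset.lcm_eq_zero_iff.mp h0)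
      exact (ha x).ne' hx0)
    have hΛpos : 0 < Λ := Nat.lcm_pos hM hNlcm
    obtain ⟨q, hq1, hqM, hqa, hqcop⟩ := hw j (Finset.mem_insert_self j N')
    set g : ℕ := Nat.gcd Λ (a j) with hgdef
    have hqΛ : q ∣ Λ := dvd_trans hqM (Nat.dvd_lcm_left _ _)
    have hqg : q ∣ g := Nat.dvd_gcd hqΛ hqa
    have hgpos : 0 < g := Nat.gcd_pos_of_pos_right _ (ha j)
    have hga : g ∣ a j := Nat.gcd_dvd_right _ _
    have hgΛ : g ∣ Λ := Nat.gcd_dvd_left _ _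
    have hgle : g ≤ a j := Nat.le_of_dvd (ha j) hga
    -- the class representative
    set cz : ℤ := (k' * (r j : ℤ)) % (g : ℤ) with hczdef
    have hgz : (0:ℤ) < (g:ℤ) := by exact_mod_cast hgpos
    have hcznn : 0 ≤ cz := Int.emod_nonneg _ hgz.ne'
    have hczlt : cz < (g : ℤ) := Int.emod_lt_of_pos _ hgz
    set c : ℕ := cz.toNat with hcdef
    have hczc : (c : ℤ) = cz := Int.toNat_of_nonneg hcznn
    have hclt : c < g := by
      have := hczc ▸ hczlt; exact_mod_cast this
    have hgdvdcz : (g : ℤ) ∣ (k' * (r j : ℤ) - cz) := by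
      refine ⟨(k' * (r j : ℤ)) / (g : ℤ), ?_⟩
      have h := Int.mul_ediv_add_emod (k' * (r j : ℤ)) (g : ℤ)
      linarith
    -- c ≠ 0
    have hc1 : 1 ≤ c := by
      rcases Nat.eq_zero_or_pos c with hc0 | h
      · exfalso
        have hcz0 : cz = 0 := by rw [← hczc, hc0]; simp
        have hgk' : (g : ℤ) ∣ k' * (r j : ℤ) := by
          have := hgdvdcz; rw [hcz0] at this; simpa using this
        have hqk' : (q : ℤ) ∣ k' * (r j : ℤ) :=
          dvd_trans (by exact_mod_cast Int.natCast_dvd_natCast.mpr hqg) hgk'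
        have hqM' : (q : ℤ) ∣ (M : ℤ) := Int.natCast_dvd_natCast.mpr hqM
        have hqkk : (q : ℤ) ∣ (k' - k₀) := dvd_trans hqM' hk'M
        have hqk0 : (q : ℤ) ∣ k₀ * (r j : ℤ) := by
          have : k₀ * (r j : ℤ) = k' * (r j : ℤ) - (k' - k₀) * (r j : ℤ) := by ring
          rw [this]
          exact dvd_sub hqk' (Dvd.dvd.mul_right hqkk _)
        have := hqcop.isUnit_of_dvd' dvd_rfl hqk0
        rcases Int.isUnit_iff.mp this with h1 | h1
        · have : q = 1 := by exact_mod_cast h1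
          omega
        · have : (0:ℤ) ≤ (q:ℤ) := Int.natCast_nonneg q
          omega
      · exact h
    have hcg1 : c ≤ g - 1 := by omega
    -- inverse of r j mod a j
    have hrj : IsCoprime ((r j : ℕ) : ℤ) ((a j : ℕ) : ℤ) := by
      rw [Int.isCoprime_iff_gcd_eq_one, Int.gcd_natCast_natCast]
      exact hcop j
    obtain ⟨u, v, huv⟩ := hrj
    set x : ℤ := (c : ℤ) * u with hxdef
    have hxr : ((a j : ℕ) : ℤ) ∣ (x * (r j : ℤ) - (c : ℤ)) :=
      ⟨-(c : ℤ) * v, by linear_combination (c : ℤ) * huv⟩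
    obtain ⟨a', ha'⟩ := hga
    have ha'z : ((a j : ℕ) : ℤ) = (g : ℤ) * (a' : ℤ) := by exact_mod_cast ha'
    have hxk : (g : ℤ) ∣ (x - k') := by
      have h1 : (g : ℤ) ∣ (x * (r j : ℤ) - (c : ℤ)) := by
        refine dvd_trans ⟨(a' : ℤ), ha'z⟩ hxr
      have hgdvdc : (g : ℤ) ∣ (k' * (r j : ℤ) - (c : ℤ)) := by rw [hczc]; exact hgdvdcz
      have h2 : (g : ℤ) ∣ ((x - k') * (r j : ℤ)) := by
        have hrw : (x - k') * (r j : ℤ)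
            = (x * (r j : ℤ) - (c : ℤ)) - (k' * (r j : ℤ) - (c : ℤ)) := by ring
        rw [hrw]
        exact dvd_sub h1 hgdvdc
      have hgr : IsCoprime ((g : ℕ) : ℤ) ((r j : ℕ) : ℤ) :=
        ⟨v * (a' : ℤ), u, by linear_combination huv - v * ha'z⟩
      exact hgr.dvd_of_dvd_mul_right h2
    have hcons : (Int.gcd (Λ : ℤ) ((a j : ℕ) : ℤ) : ℤ) ∣ (x - k') := by
      rw [Int.gcd_natCast_natCast]
      exact_mod_cast hxk
    obtain ⟨k, hkΛ, hkx⟩ := crt2 (Λ : ℤ) ((a j : ℕ) : ℤ) k' x hcons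
    have hMΛ : (M : ℤ) ∣ (Λ : ℤ) := Int.natCast_dvd_natCast.mpr (Nat.dvd_lcm_left _ _)
    have hA'pos : 0 < ∏ i ∈ N', a i := Finset.prod_pos (fun i _ => ha i)
    have key : Nat.lcm M ((insert j N').lcm a) * ∏ i ∈ insert j N', Function.update ρ' j c i
        < M * ∏ i ∈ insert j N', a i := by
      have hlcmrw : Nat.lcm M ((insert j N').lcm a) = Nat.lcm Λ (a j) := by
        rw [Finset.lcm_insert, lcm_eq_nat_lcm, hΛdef, Nat.lcm_assoc, Nat.lcm_comm (N'.lcm a) (a j)]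
      have hprodrw : ∏ i ∈ insert j N', Function.update ρ' j c i
          = c * ∏ i ∈ N', ρ' i := by
        rw [Finset.prod_insert hjN', Function.update_self]
        congr 1
        exact Finset.prod_congr rfl (fun i hi =>
          Function.update_of_ne (fun he : i = j => hjN' (he ▸ hi)) _ _)
      have hprodarw : ∏ i ∈ insert j N', a i = a j * ∏ i ∈ N', a i :=
        Finset.prod_insert hjN'
      rw [hlcmrw, hprodrw, hprodarw]
      refine Nat.lt_of_mul_lt_mul_left (a := g) ?_
      have hglcm : g * Nat.lcm Λ (a j) = Λ * a j := Nat.gcd_mul_lcm Λ (a j)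
      calc g * (Nat.lcm Λ (a j) * (c * ∏ i ∈ N', ρ' i))
          = (g * Nat.lcm Λ (a j)) * (c * ∏ i ∈ N', ρ' i) := by ring
        _ = (Λ * a j) * (c * ∏ i ∈ N', ρ' i) := by rw [hglcm]
        _ = (a j * c) * (Λ * ∏ i ∈ N', ρ' i) := by ring
        _ ≤ (a j * c) * (M * ∏ i ∈ N', a i) := Nat.mul_le_mul_left _ hbound
        _ ≤ (a j * (g-1)) * (M * ∏ i ∈ N', a i) :=
            Nat.mul_le_mul_right _ (Nat.mul_le_mul_left _ hcg1)
        _ < (a j * g) * (M * ∏ i ∈ N', a i) :=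
            mul_lt_mul_of_pos_right (mul_lt_mul_of_pos_left (by omega) (ha j))
              (Nat.mul_pos hM hA'pos)
        _ = g * (M * (a j * ∏ i ∈ N', a i)) := by ring
    refine ⟨k, Function.update ρ' j c, ?_, ?_, le_of_lt key, fun _ => key⟩
    · have : k - k₀ = (k - k') + (k' - k₀) := by ring
      rw [this]
      exact dvd_add (dvd_trans hMΛ hkΛ) hk'M
    · intro j' hj'
      rcases Finset.mem_insert.mp hj' with hj'j | hj'N'
      · subst hj'j
        rw [Function.update_self]
        refine ⟨hc1, lt_of_lt_of_le hclt hgle, ?_⟩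
        have : k * (r j' : ℤ) - (c : ℤ)
            = (k - x) * (r j' : ℤ) + (x * (r j' : ℤ) - (c : ℤ)) := by ring
        rw [this]
        exact dvd_add (hkx.mul_right _) hxr
      · have hne : j' ≠ j := fun he : j' = j => hjN' (he ▸ hj'N')
        rw [Function.update_of_ne hne]
        obtain ⟨h1, h2, h3⟩ := hρ' j' hj'N'
        refine ⟨h1, h2, ?_⟩
        have hdvd : ((a j' : ℕ) : ℤ) ∣ (k - k') := by
          refine dvd_trans ?_ hkΛ
          exact_mod_cast Int.natCast_dvd_natCast.mpr
            (dvd_trans (Finset.dvd_lcm hj'N') (Nat.dvd_lcm_right M _))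
        have : k * (r j' : ℤ) - (ρ' j' : ℤ)
            = (k - k') * (r j' : ℤ) + (k' * (r j' : ℤ) - (ρ' j' : ℤ)) := by ring
        rw [this]
        exact dvd_add (hdvd.mul_right _) h3

private lemma owners_k {n : ℕ} (a r : Fin n → ℕ)
    (hcop : ∀ j, Nat.gcd (r j) (a j) = 1) (O : Finset (Fin n))
    (hPO : ∀ x ∈ O, ∀ y ∈ O, x ≠ y → Nat.gcd (a x) (a y) = 1) :
    ∃ k₀ : ℤ, ∀ o ∈ O, ((a o : ℕ) : ℤ) ∣ (k₀ * (r o : ℤ) - 1) := by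
  revert hPO
  induction O using Finset.induction_on with
  | empty => exact fun _ => ⟨1, by simp⟩
  | @insert o O' hoO' ih =>
    intro hPO
    obtain ⟨k', hk'⟩ := ih (fun x hx y hy hxy =>
      hPO x (Finset.mem_insert_of_mem hx) y (Finset.mem_insert_of_mem hy) hxy)
    have hro : IsCoprime ((r o : ℕ) : ℤ) ((a o : ℕ) : ℤ) := by
      rw [Int.isCoprime_iff_gcd_eq_one, Int.gcd_natCast_natCast]
      exact hcop o
    obtain ⟨u, v, huv⟩ := hro
    have hcopP : Nat.gcd (∏ x ∈ O', a x) (a o) = 1 := by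
      apply Nat.Coprime.prod_left
      intro x hx
      exact hPO x (Finset.mem_insert_of_mem hx) o (Finset.mem_insert_self o O')
        (fun he => hoO' (he ▸ hx))
    obtain ⟨k₀, hk₀P, hk₀u⟩ := crt2 ((∏ x ∈ O', a x : ℕ) : ℤ) ((a o : ℕ) : ℤ) k' u (by
      rw [Int.gcd_natCast_natCast, hcopP]
      exact one_dvd _)
    refine ⟨k₀, fun o' ho' => ?_⟩
    rcases Finset.mem_insert.mp ho' with h | h
    · subst h
      have : k₀ * (r o' : ℤ) - 1 = (k₀ - u) * (r o' : ℤ) + (u * (r o' : ℤ) - 1) := by ring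
      rw [this]
      exact dvd_add (hk₀u.mul_right _) ⟨-v, by linear_combination huv⟩
    · have hdvd : ((a o' : ℕ) : ℤ) ∣ (k₀ - k') :=
        dvd_trans (Int.natCast_dvd_natCast.mpr (Finset.dvd_prod_of_mem a h)) hk₀P
      have : k₀ * (r o' : ℤ) - 1 = (k₀ - k') * (r o' : ℤ) + (k' * (r o' : ℤ) - 1) := by ring
      rw [this]
      exact dvd_add (hdvd.mul_right _) (hk' o' h)


/-- Lemma 5.2 ("moreover" part): under the hypotheses of the first part,
the moduli `a 1, …, a n` fail to be pairwise relatively prime if and only if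
the witness `k` can be chosen so that the inequality
`lcm (a 1, …, a n) * ∏ ρ j ≤ ∏ a j` is strict. -/
theorem stmt_1 (n : ℕ) (hn : 1 ≤ n) (a r : Fin n → ℕ)
    (hra : ∀ j, 1 ≤ r j ∧ r j < a j) (hcop : ∀ j, Nat.gcd (r j) (a j) = 1) :
    (∃ s t : Fin n, s ≠ t ∧ 1 < Nat.gcd (a s) (a t)) ↔
      ∃ k : ℤ, (∀ j, ¬ ((a j : ℤ) ∣ k * (r j : ℤ))) ∧
        ∃ ρ : Fin n → ℤ,
          (∀ j, 1 ≤ ρ j ∧ ρ j < (a j : ℤ) ∧ ρ j ≡ k * (r j : ℤ) [ZMOD (a j : ℕ)]) ∧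
          ((Finset.univ.lcm a : ℕ) : ℤ) * ∏ j, ρ j < ∏ j, (a j : ℤ) := by
  classical
  have ha : ∀ j, 0 < a j := by
    intro j; have := (hra j).1; have := (hra j).2; omega
  constructor
  · rintro ⟨s, t, hst, hgcdst⟩
    set P : Finset (Fin n) → Prop :=
      fun O => ∀ x ∈ O, ∀ y ∈ O, x ≠ y → Nat.gcd (a x) (a y) = 1 with hPdef
    have hsing : P {s} := by
      intro x hx y hy hxy
      rw [Finset.mem_singleton] at hx hy
      subst hx; subst hy; exact absurd rfl hxy
    obtain ⟨O, hOmem, hOmax⟩ :=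
      Finset.exists_max_image ((Finset.univ : Finset (Finset (Fin n))).filter P) Finset.card
        ⟨{s}, Finset.mem_filter.mpr ⟨Finset.mem_univ _, hsing⟩⟩
    have hPO : P O := (Finset.mem_filter.mp hOmem).2
    have hconf : ∀ j, j ∉ O → ∃ o ∈ O, 1 < Nat.gcd (a j) (a o) := by
      intro j hj
      by_contra hcon
      push_neg at hcon
      have hPins : P (insert j O) := by
        intro x hx y hy hxy
        rcases Finset.mem_insert.mp hx with rfl | hx'
        · rcases Finset.mem_insert.mp hy with rfl | hy'
          · exact absurd rfl hxy
          · have h1 := hcon y hy'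
            have hpos : 0 < Nat.gcd (a x) (a y) := Nat.gcd_pos_of_pos_left _ (ha x)
            omega
        · rcases Finset.mem_insert.mp hy with rfl | hy'
          · have h1 := hcon x hx'
            have hpos : 0 < Nat.gcd (a x) (a y) := Nat.gcd_pos_of_pos_left _ (ha x)
            rw [Nat.gcd_comm] at h1
            omega
          · exact hPO x hx' y hy' hxy
      have hcard : (insert j O).card ≤ O.card :=
        hOmax _ (Finset.mem_filter.mpr ⟨Finset.mem_univ _, hPins⟩)
      rw [Finset.card_insert_of_notMem hj] at hcard
      omega
    obtain ⟨k₀, hk₀⟩ := owners_k a r hcop O hPO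
    set M : ℕ := ∏ o ∈ O, a o with hMdef
    have hMpos : 0 < M := Finset.prod_pos (fun o _ => ha o)
    set N : Finset (Fin n) := Finset.univ \ O with hNdef
    have hNne : N.Nonempty := by
      rcases em (s ∈ O) with hs | hs
      · rcases em (t ∈ O) with ht | ht
        · have := hPO s hs t ht hst
          omega
        · exact ⟨t, Finset.mem_sdiff.mpr ⟨Finset.mem_univ _, ht⟩⟩
      · exact ⟨s, Finset.mem_sdiff.mpr ⟨Finset.mem_univ _, hs⟩⟩
    have hw : ∀ j ∈ N, ∃ q : ℕ, 1 < q ∧ q ∣ M ∧ q ∣ a j ∧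
        IsCoprime (q : ℤ) (k₀ * (r j : ℤ)) := by
      intro j hj
      have hjO : j ∉ O := (Finset.mem_sdiff.mp hj).2
      obtain ⟨o, hoO, hgcd⟩ := hconf j hjO
      refine ⟨Nat.gcd (a j) (a o), hgcd,
        dvd_trans (Nat.gcd_dvd_right _ _) (Finset.dvd_prod_of_mem a hoO),
        Nat.gcd_dvd_left _ _, ?_⟩
      obtain ⟨w, hwo⟩ := hk₀ o hoO
      obtain ⟨e, he⟩ := Nat.gcd_dvd_right (a j) (a o)
      have hez : ((a o : ℕ) : ℤ) = (Nat.gcd (a j) (a o) : ℤ) * (e : ℤ) := by exact_mod_cast he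
      have hqk₀ : IsCoprime ((Nat.gcd (a j) (a o) : ℕ) : ℤ) k₀ :=
        ⟨-(e : ℤ) * w, (r o : ℤ), by linear_combination hwo + w * hez⟩
      have hrj : IsCoprime ((r j : ℕ) : ℤ) ((a j : ℕ) : ℤ) := by
        rw [Int.isCoprime_iff_gcd_eq_one, Int.gcd_natCast_natCast]; exact hcop j
      obtain ⟨u, v, huv⟩ := hrj
      obtain ⟨f, hf⟩ := Nat.gcd_dvd_left (a j) (a o)
      have hfz : ((a j : ℕ) : ℤ) = (Nat.gcd (a j) (a o) : ℤ) * (f : ℤ) := by exact_mod_cast hf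
      have hqrj : IsCoprime ((Nat.gcd (a j) (a o) : ℕ) : ℤ) ((r j : ℕ) : ℤ) :=
        ⟨v * (f : ℤ), u, by linear_combination huv - v * hfz⟩
      exact hqk₀.mul_right hqrj
    obtain ⟨k, ρN, hkM, hρN, _, hstrict⟩ := ext_lemma a r ha hcop M hMpos k₀ N hw
    have hklt := hstrict hNne
    set ρ : Fin n → ℕ := fun j => if j ∈ O then 1 else ρN j with hρdef
    have hmain : ∀ j, 1 ≤ ρ j ∧ ρ j < a j ∧
        ((a j : ℤ) ∣ (k * (r j : ℤ) - (ρ j : ℤ))) := by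
      intro j
      by_cases hj : j ∈ O
      · simp only [hρdef, if_pos hj]
        refine ⟨le_refl 1, ?_, ?_⟩
        · have := (hra j).1; have := (hra j).2; omega
        · have hdvdM : ((a j : ℕ) : ℤ) ∣ (k - k₀) :=
            dvd_trans (Int.natCast_dvd_natCast.mpr (Finset.dvd_prod_of_mem a hj)) hkM
          have hrw : k * (r j : ℤ) - 1
              = (k - k₀) * (r j : ℤ) + (k₀ * (r j : ℤ) - 1) := by ring
          push_cast
          rw [hrw]
          exact dvd_add (hdvdM.mul_right _) (hk₀ j hj)
      · have hjN : j ∈ N := Finset.mem_sdiff.mpr ⟨Finset.mem_univ _, hj⟩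
        obtain ⟨h1, h2, h3⟩ := hρN j hjN
        simp only [hρdef, if_neg hj]
        exact ⟨h1, h2, h3⟩
    refine ⟨k, ?_, fun j => ((ρ j : ℕ) : ℤ), ?_, ?_⟩
    · intro j hdvd
      obtain ⟨h1, h2, h3⟩ := hmain j
      have hdρ : ((a j : ℕ) : ℤ) ∣ ((ρ j : ℕ) : ℤ) := by
        have hrw : ((ρ j : ℕ) : ℤ) = k * (r j : ℤ) - (k * (r j : ℤ) - (ρ j : ℤ)) := by ring
        rw [hrw]
        exact dvd_sub hdvd h3
      have hle := Int.le_of_dvd (by exact_mod_cast h1) hdρ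
      have hlt2 : ((ρ j : ℕ) : ℤ) < ((a j : ℕ) : ℤ) := by exact_mod_cast h2
      omega
    · intro j
      obtain ⟨h1, h2, h3⟩ := hmain j
      refine ⟨?_, ?_, ?_⟩
      · show (1 : ℤ) ≤ ((ρ j : ℕ) : ℤ)
        exact_mod_cast h1
      · show ((ρ j : ℕ) : ℤ) < ((a j : ℕ) : ℤ)
        exact_mod_cast h2
      · show ((ρ j : ℕ) : ℤ) ≡ k * (r j : ℤ) [ZMOD (a j : ℕ)]
        exact Int.modEq_iff_dvd.mpr h3
    · show ((Finset.univ.lcm a : ℕ) : ℤ) * ∏ j, ((ρ j : ℕ) : ℤ) < ∏ j, ((a j : ℕ) : ℤ)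
      have hlcmsplit : Finset.univ.lcm a = Nat.lcm M (N.lcm a) := by
        have hOlcm : O.lcm a = M := lcm_eq_prod a O hPO
        apply Nat.dvd_antisymm
        · apply Finset.lcm_dvd
          intro b _
          by_cases hb : b ∈ O
          · exact dvd_trans (dvd_trans (Finset.dvd_lcm hb) (hOlcm ▸ dvd_refl M))
              (Nat.dvd_lcm_left M (N.lcm a))
          · have hbN : b ∈ N := Finset.mem_sdiff.mpr ⟨Finset.mem_univ _, hb⟩
            exact dvd_trans (Finset.dvd_lcm hbN) (Nat.dvd_lcm_right M (N.lcm a))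
        · apply Nat.lcm_dvd
          · exact hOlcm ▸ Finset.lcm_dvd (fun b _ => Finset.dvd_lcm (Finset.mem_univ b))
          · exact Finset.lcm_dvd (fun b _ => Finset.dvd_lcm (Finset.mem_univ b))
      have hprodsplit : ∏ j, a j = M * ∏ j ∈ N, a j := by
        rw [← Finset.prod_sdiff (Finset.subset_univ O), ← hNdef, ← hMdef, mul_comm]
      have hprodrho : ∏ j, ρ j = ∏ j ∈ N, ρN j := by
        rw [← Finset.prod_sdiff (Finset.subset_univ O), ← hNdef]
        have h1 : ∏ j ∈ O, ρ j = 1 :=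
          Finset.prod_eq_one (fun j hj => by simp [hρdef, if_pos hj])
        have h2 : ∏ j ∈ N, ρ j = ∏ j ∈ N, ρN j :=
          Finset.prod_congr rfl (fun j hj => by
            simp [hρdef, (Finset.mem_sdiff.mp (hNdef ▸ hj)).2])
        rw [h1, h2, mul_one]
      have hfinal : Finset.univ.lcm a * ∏ j, ρ j < ∏ j, a j := by
        rw [hlcmsplit, hprodrho, hprodsplit]
        exact hklt
      exact_mod_cast hfinal
  · rintro ⟨k, hval, ρ, hρ, hlt⟩
    by_contra hno
    push_neg at hno
    have hPuniv : ∀ x ∈ (Finset.univ : Finset (Fin n)), ∀ y ∈ (Finset.univ : Finset (Fin n)),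
        x ≠ y → Nat.gcd (a x) (a y) = 1 := by
      intro x _ y _ hxy
      have h1 := hno x y hxy
      have hpos : 0 < Nat.gcd (a x) (a y) := Nat.gcd_pos_of_pos_left _ (ha x)
      omega
    have hL : Finset.univ.lcm a = ∏ j, a j := lcm_eq_prod a Finset.univ hPuniv
    have hone : (1 : ℤ) ≤ ∏ j, ρ j := by
      have hprd := Finset.prod_le_prod (s := Finset.univ) (f := fun _ : Fin n => (1 : ℤ))
        (g := ρ) (fun i _ => zero_le_one) (fun i _ => (hρ i).1)
      simpa using hprd
    have hcast : ((Finset.univ.lcm a : ℕ) : ℤ) = ∏ j, (a j : ℤ) := by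
      rw [hL]; push_cast; rfl
    rw [hcast] at hlt
    have hpos : (0 : ℤ) ≤ ∏ j, (a j : ℤ) :=
      Finset.prod_nonneg (fun i _ => by positivity)
    nlinarith [hlt, hone, hpos]
end

section
/- Let n ≥ 1 and let a_1, …, a_n and r_1, …, r_n be positive integers such that 1 ≤ r_j < a_j and gcd(r_j, a_j) = 1 for every j, and fix an index t ∈ {1, …, n}. Then there exists an integer k such that k·r_t ≡ 1 (mod a_t), a_j ∤ k·r_j for every j, and, writing ρ_j for the unique integer with 1 ≤ ρ_j < a_j and ρ_j ≡ k·r_j (mod a_j), one has lcm(a_1, …, a_n) · (ρ_1 · ρ_2 ⋯ ρ_n) ≤ a_1 · a_2 ⋯ a_n. -/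
private lemma aux_inv (x n v : ℤ) (h : IsCoprime x n) : ∃ y : ℤ, n ∣ (x * y - v) := by
  obtain ⟨p, q, hpq⟩ := h
  exact ⟨p * v, ⟨-(q * v), by linear_combination v * hpq⟩⟩

private lemma aux_lcm_ne_zero {ι : Type*} (J : Finset ι) (a : ι → ℕ)
    (ha : ∀ j ∈ J, 1 ≤ a j) : J.lcm a ≠ 0 := by
  have h1 : J.lcm a ∣ ∏ j ∈ J, a j :=
    Finset.lcm_dvd fun b hb => Finset.dvd_prod_of_mem a hb
  have h2 : ∏ j ∈ J, a j ≠ 0 := by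
    rw [Finset.prod_ne_zero_iff]
    intro i hi
    exact Nat.one_le_iff_ne_zero.mp (ha i hi)
  intro h0
  rw [h0] at h1
  exact h2 (zero_dvd_iff.mp h1)

private theorem core {ι : Type*} [DecidableEq ι] :
    ∀ (m : ℕ) (J : Finset ι), J.card ≤ m → ∀ (a : ι → ℕ) (u e : ι → ℤ) (F : Finset ι) (s : ι),
    s ∈ J → F ⊆ J → (F.Nonempty → s ∈ F) →
    (∀ j ∈ J, 1 ≤ a j) → (∀ j ∈ J, IsCoprime (u j) ((a j : ℤ))) →
    (∀ j ∈ F, 2 ≤ a j ∧ e j = 0) →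
    ∃ y : ℤ, ∃ σ : ι → ℤ,
      (∀ j ∈ J, 0 ≤ σ j ∧ σ j < (a j : ℤ) ∧ (a j : ℤ) ∣ (u j * y + e j - σ j)) ∧
      (∀ j ∈ F, 1 ≤ σ j) ∧
      (s ∈ F → (a s : ℤ) ∣ (u s * y - 1)) ∧
      ((J.lcm a : ℕ) : ℤ) * ∏ j ∈ J, (if j ∈ F then σ j else σ j + 1) ≤ ∏ j ∈ J, (a j : ℤ) := by
  intro m
  induction m with
  | zero =>
    intro J hJ a u e F s hsJ _ _ _ _ _
    exfalso
    rw [Nat.le_zero, Finset.card_eq_zero] at hJ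
    rw [hJ] at hsJ
    exact Finset.notMem_empty s hsJ
  | succ m IH =>
    intro J hJcard a u e F s hsJ hFJ hsF ha hu hF
    classical
    set v : ℤ := if s ∈ F then 1 else 0 with hv
    obtain ⟨y₀, hy₀⟩ := aux_inv (u s) ((a s : ℤ)) (v - e s) (hu s hsJ)
    set J' := J.erase s with hJ'def
    have hgpos : ∀ j, 0 < Nat.gcd (a j) (a s) :=
      fun j => Nat.gcd_pos_of_pos_right _ (ha s hsJ)
    set g : ι → ℕ := fun j => Nat.gcd (a j) (a s) with hgdef
    set A : ι → ℕ := fun j => a j / g j with hA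
    set qq : ι → ℕ := fun j => a s / g j with hqq
    have hgA : ∀ j, g j * A j = a j := fun j => Nat.mul_div_cancel' (Nat.gcd_dvd_left _ _)
    have hgq : ∀ j, g j * qq j = a s := fun j => Nat.mul_div_cancel' (Nat.gcd_dvd_right _ _)
    set c : ι → ℤ := fun j => (u j * y₀ + e j) % (g j : ℤ) with hc
    set E : ι → ℤ := fun j => (u j * y₀ + e j) / (g j : ℤ) with hE
    have hdecomp : ∀ j, (g j : ℤ) * E j + c j = u j * y₀ + e j := fun j => Int.mul_ediv_add_emod _ _
    have hcnonneg : ∀ j, 0 ≤ c j := by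
      intro j
      apply Int.emod_nonneg
      exact_mod_cast (hgpos j).ne'
    have hclt : ∀ j, c j < (g j : ℤ) := by
      intro j
      apply Int.emod_lt_of_pos
      exact_mod_cast hgpos j
    set F' : Finset ι := (F.erase s).filter (fun j => c j = 0) with hF'def
    have hF'F : F' ⊆ F.erase s := Finset.filter_subset _ _
    have hF'J' : F' ⊆ J' := subset_trans hF'F (Finset.erase_subset_erase s hFJ)
    have hsFmem : ∀ j ∈ F', s ∈ F := fun j hj =>
      hsF ⟨j, (Finset.erase_subset s F) (hF'F hj)⟩
    have hy₀s : ∀ j ∈ F', IsCoprime y₀ ((a s : ℤ)) := by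
      intro j hj
      have hes : e s = 0 := (hF s (hsFmem j hj)).2
      have hv1 : v = 1 := if_pos (hsFmem j hj)
      obtain ⟨w, hw⟩ := hy₀
      rw [hes, hv1] at hw
      exact ⟨u s, -w, by linear_combination hw⟩
    have hg1 : ∀ j ∈ F', g j = 1 := by
      intro j hj
      obtain ⟨hjF, hjc⟩ := Finset.mem_filter.mp hj
      have hjF2 : j ∈ F := (Finset.erase_subset s F) hjF
      have hjJ : j ∈ J := hFJ hjF2
      have hej : e j = 0 := (hF j hjF2).2
      have hdvd : (g j : ℤ) ∣ u j * y₀ := by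
        have h0 : (g j : ℤ) ∣ (u j * y₀ + e j) := Int.dvd_of_emod_eq_zero hjc
        rw [hej, add_zero] at h0
        exact h0
      have hcop1 : IsCoprime (u j) ((g j : ℤ)) :=
        (hu j hjJ).of_isCoprime_of_dvd_right
          (Int.natCast_dvd_natCast.mpr (Nat.gcd_dvd_left _ _))
      have hcop2 : IsCoprime y₀ ((g j : ℤ)) :=
        (hy₀s j hj).of_isCoprime_of_dvd_right
          (Int.natCast_dvd_natCast.mpr (Nat.gcd_dvd_right _ _))
      have hunit : IsUnit ((g j : ℤ)) := (hcop1.mul_left hcop2).isUnit_of_dvd' hdvd dvd_rfl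
      rcases Int.isUnit_iff.mp hunit with h1 | h2
      · exact_mod_cast h1
      · exfalso
        have hpos : (0:ℤ) < (g j : ℤ) := by exact_mod_cast hgpos j
        rw [h2] at hpos
        linarith
    set N : ℕ := F'.lcm A with hN
    have hNcop : Nat.Coprime (a s) N := by
      have h1 : ∀ j ∈ F', Nat.Coprime (a s) (A j) := by
        intro j hj
        have hAj : A j = a j := by
          show a j / g j = a j
          rw [hg1 j hj, Nat.div_one]
        rw [hAj]
        exact Nat.coprime_comm.mp (hg1 j hj)
      have h2 : N ∣ ∏ j ∈ F', A j :=
        Finset.lcm_dvd fun b hb => Finset.dvd_prod_of_mem A hb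
      exact Nat.Coprime.coprime_dvd_right h2 (Nat.Coprime.prod_right h1)
    obtain ⟨h, hh⟩ := aux_inv ((a s : ℤ)) ((N : ℤ)) y₀ (Nat.isCoprime_iff_coprime.mpr hNcop)
    set u' : ι → ℤ := fun j => u j * (qq j : ℤ) with hu'def
    set ee : ι → ℤ := fun j => if j ∈ F' then 0 else E j - u' j * h with heedef
    have hA1 : ∀ j ∈ J', 1 ≤ A j := by
      intro j hj
      have h1 := hgA j
      have h2 := ha j (Finset.mem_of_mem_erase hj)
      rcases Nat.eq_zero_or_pos (A j) with h0 | h0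
      · rw [h0, Nat.mul_zero] at h1
        omega
      · exact h0
    have inner : ∃ z : ℤ, ∃ τ : ι → ℤ,
        (∀ j ∈ J', 0 ≤ τ j ∧ τ j < (A j : ℤ) ∧ (A j : ℤ) ∣ (u' j * z + ee j - τ j)) ∧
        (∀ j ∈ F', 1 ≤ τ j) ∧
        ((J'.lcm A : ℕ) : ℤ) * ∏ j ∈ J', (if j ∈ F' then τ j else τ j + 1) ≤
          ∏ j ∈ J', (A j : ℤ) := by
      rcases Finset.eq_empty_or_nonempty J' with hemp | hne
      · refine ⟨0, fun _ => 0, ?_, ?_, ?_⟩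
        · intro j hj
          rw [hemp] at hj
          exact absurd hj (Finset.notMem_empty j)
        · intro j hj
          have := hF'J' hj
          rw [hemp] at this
          exact absurd this (Finset.notMem_empty j)
        · rw [hemp]
          simp
      · obtain ⟨s', hs'J, hs'F⟩ : ∃ s', s' ∈ J' ∧ (F'.Nonempty → s' ∈ F') := by
          rcases Finset.eq_empty_or_nonempty F' with hFe | hFn
          · refine ⟨hne.choose, hne.choose_spec, ?_⟩
            rw [hFe]
            rintro ⟨x, hx⟩
            exact absurd hx (Finset.notMem_empty x)
          · exact ⟨hFn.choose, hF'J' hFn.choose_spec, fun _ => hFn.choose_spec⟩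
        have hcard : J'.card ≤ m := by
          have h1 : J'.card = J.card - 1 := by
            rw [hJ'def]; exact Finset.card_erase_of_mem hsJ
          have h2 : 0 < J.card := Finset.card_pos.mpr ⟨s, hsJ⟩
          omega
        have hu'' : ∀ j ∈ J', IsCoprime (u' j) ((A j : ℤ)) := by
          intro j hj
          have hjJ := Finset.mem_of_mem_erase hj
          have h1 : IsCoprime (u j) ((A j : ℤ)) := by
            apply (hu j hjJ).of_isCoprime_of_dvd_right
            exact Int.natCast_dvd_natCast.mpr ⟨g j, by rw [mul_comm]; exact (hgA j).symm⟩
          have h2 : Nat.Coprime (A j) (qq j) := Nat.coprime_div_gcd_div_gcd (hgpos j)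
          have h2' : IsCoprime ((qq j : ℤ)) ((A j : ℤ)) :=
            Nat.isCoprime_iff_coprime.mpr h2.symm
          exact h1.mul_left h2'
        have hF'' : ∀ j ∈ F', 2 ≤ A j ∧ ee j = 0 := by
          intro j hj
          constructor
          · have hAj : A j = a j := by
              show a j / g j = a j
              rw [hg1 j hj, Nat.div_one]
            rw [hAj]
            exact (hF j ((Finset.erase_subset s F) (hF'F hj))).1
          · simp [heedef, hj]
        obtain ⟨z, τ, hh1, hh2, _, hh4⟩ :=
          IH J' hcard A u' ee F' s' hs'J hF'J' hs'F hA1 hu'' hF''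
        exact ⟨z, τ, hh1, hh2, hh4⟩
    obtain ⟨z, τ, hτ, hτF, hbd⟩ := inner
    set y : ℤ := y₀ + (a s : ℤ) * (z - h) with hy
    set σ : ι → ℤ := fun j => if j = s then v else c j + (g j : ℤ) * τ j with hσ
    have hσs : σ s = v := if_pos rfl
    have hσj : ∀ j, j ≠ s → σ j = c j + (g j : ℤ) * τ j := fun j hj => if_neg hj
    refine ⟨y, σ, ?_, ?_, ?_, ?_⟩
    · -- ranges and divisibility
      intro j hjJ
      by_cases hjs : j = s
      · subst hjs
        rw [hσs]
        refine ⟨?_, ?_, ?_⟩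
        · rw [hv]; split <;> norm_num
        · rw [hv]
          split
          · rename_i hjF
            have h2 := (hF j hjF).1
            have : (2:ℤ) ≤ (a j : ℤ) := by exact_mod_cast h2
            linarith
          · have h1 := ha j hjJ
            have : (1:ℤ) ≤ (a j : ℤ) := by exact_mod_cast h1
            linarith
        · have hexp : u j * y + e j - v = (u j * y₀ - (v - e j)) + (a j : ℤ) * (u j * (z - h)) := by
            rw [hy]; ring
          rw [hexp]
          exact dvd_add hy₀ (Dvd.intro _ rfl)
      · have hjJ' : j ∈ J' := Finset.mem_erase.mpr ⟨hjs, hjJ⟩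
        obtain ⟨ht0, ht1, ht2⟩ := hτ j hjJ'
        rw [hσj j hjs]
        have hgz : (0:ℤ) < (g j : ℤ) := by exact_mod_cast hgpos j
        have hajsplit : (a j : ℤ) = (g j : ℤ) * (A j : ℤ) := by exact_mod_cast (hgA j).symm
        have hasplit : (a s : ℤ) = (g j : ℤ) * (qq j : ℤ) := by exact_mod_cast (hgq j).symm
        refine ⟨?_, ?_, ?_⟩
        · exact add_nonneg (hcnonneg j) (mul_nonneg hgz.le ht0)
        · have h1 : c j ≤ (g j:ℤ) - 1 := by linarith [hclt j]
          have h2 : τ j ≤ (A j : ℤ) - 1 := by linarith [ht1]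
          have h3 : (g j : ℤ) * τ j ≤ (g j : ℤ) * ((A j:ℤ) - 1) :=
            mul_le_mul_of_nonneg_left h2 hgz.le
          rw [hajsplit]
          nlinarith
        · have hexpand : u j * y + e j - (c j + (g j:ℤ) * τ j)
              = (g j : ℤ) * ((E j + u' j * (z - h)) - τ j) := by
            rw [hy]
            have hd := hdecomp j
            have hu'j : u' j = u j * (qq j : ℤ) := rfl
            linear_combination -hd + (u j * (z - h)) * hasplit - ((g j : ℤ) * (z - h)) * hu'j
          rw [hexpand, hajsplit]
          apply mul_dvd_mul_left
          by_cases hjF' : j ∈ F'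
          · have heej : ee j = 0 := by simp [heedef, hjF']
            have hg1j : g j = 1 := hg1 j hjF'
            have hej : e j = 0 := (hF j ((Finset.erase_subset s F) (hF'F hjF'))).2
            have hEj : E j = u j * y₀ := by
              show (u j * y₀ + e j) / ((g j : ℕ) : ℤ) = u j * y₀
              rw [hg1j, hej]
              simp
            have hqj : (qq j : ℤ) = (a s : ℤ) := by
              show ((a s / g j : ℕ) : ℤ) = (a s : ℤ)
              rw [hg1j, Nat.div_one]
            have d2 : (A j : ℤ) ∣ ((a s : ℤ) * h - y₀) :=
              dvd_trans (Int.natCast_dvd_natCast.mpr (Finset.dvd_lcm hjF')) hh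
            have hsplit3 : E j + u' j * (z - h) - τ j
                = (u' j * z + ee j - τ j) + (-(u j)) * ((a s:ℤ) * h - y₀) := by
              rw [hEj, heej]
              show u j * y₀ + (u j * (qq j:ℤ)) * (z - h) - τ j
                = (u j * (qq j:ℤ) * z + 0 - τ j) + (-(u j)) * ((a s:ℤ) * h - y₀)
              rw [hqj]; ring
            rw [hsplit3]
            exact dvd_add ht2 (Dvd.dvd.mul_left d2 _)
          · have heej : ee j = E j - u' j * h := by simp [heedef, hjF']
            have hsplit3 : E j + u' j * (z - h) - τ j = u' j * z + ee j - τ j := by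
              rw [heej]; ring
            rw [hsplit3]
            exact ht2
    · -- flags
      intro j hjF
      by_cases hjs : j = s
      · subst hjs
        rw [hσs, hv, if_pos hjF]
      · rw [hσj j hjs]
        have hjJ' : j ∈ J' := Finset.mem_erase.mpr ⟨hjs, hFJ hjF⟩
        have hgz : (1:ℤ) ≤ (g j : ℤ) := by exact_mod_cast hgpos j
        by_cases hc0 : c j = 0
        · have hjF' : j ∈ F' := Finset.mem_filter.mpr ⟨Finset.mem_erase.mpr ⟨hjs, hjF⟩, hc0⟩
          have hτ1 := hτF j hjF'
          nlinarith [hcnonneg j]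
        · have hc1 : 1 ≤ c j := by
            have := hcnonneg j
            omega
          have ht0 := (hτ j hjJ').1
          nlinarith
    · -- designated
      intro hsFm
      have hes : e s = 0 := (hF s hsFm).2
      have hv1 : v = 1 := if_pos hsFm
      have hexp : u s * y - 1 = (u s * y₀ - (v - e s)) + (a s:ℤ) * (u s * (z - h)) := by
        rw [hy, hv1, hes]; ring
      rw [hexp]
      exact dvd_add hy₀ (Dvd.intro _ rfl)
    · -- bound
      have hws : (if s ∈ F then σ s else σ s + 1) = 1 := by
        rw [hσs, hv]
        by_cases hsFm : s ∈ F <;> simp [hsFm]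
      have hprodsplit : ∏ j ∈ J, (if j ∈ F then σ j else σ j + 1)
          = (if s ∈ F then σ s else σ s + 1) * ∏ j ∈ J', (if j ∈ F then σ j else σ j + 1) :=
        (Finset.mul_prod_erase J _ hsJ).symm
      have hfac0 : ∀ j ∈ J', 0 ≤ (if j ∈ F then σ j else σ j + 1) := by
        intro j hj
        have hjs : j ≠ s := (Finset.mem_erase.mp hj).1
        have hgz : (0:ℤ) < (g j : ℤ) := by exact_mod_cast hgpos j
        have ht0 := (hτ j hj).1
        rw [hσj j hjs]
        have hbase : 0 ≤ c j + (g j:ℤ) * τ j :=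
          add_nonneg (hcnonneg j) (mul_nonneg hgz.le ht0)
        split
        · exact hbase
        · linarith
      have hfac : ∀ j ∈ J', (if j ∈ F then σ j else σ j + 1)
          ≤ (g j : ℤ) * (if j ∈ F' then τ j else τ j + 1) := by
        intro j hj
        have hjs : j ≠ s := (Finset.mem_erase.mp hj).1
        have hgz : (0:ℤ) < (g j : ℤ) := by exact_mod_cast hgpos j
        have ht0 := (hτ j hj).1
        have hcl := hclt j
        have hcn := hcnonneg j
        rw [hσj j hjs]
        by_cases hjF' : j ∈ F'
        · have hc0 : c j = 0 := (Finset.mem_filter.mp hjF').2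
          have hjF : j ∈ F := (Finset.erase_subset s F) (hF'F hjF')
          rw [if_pos hjF, if_pos hjF', hc0, zero_add]
        · rw [if_neg hjF']
          by_cases hjF : j ∈ F
          · rw [if_pos hjF]
            nlinarith
          · rw [if_neg hjF]
            nlinarith
      have hprodle : ∏ j ∈ J', (if j ∈ F then σ j else σ j + 1)
          ≤ ∏ j ∈ J', ((g j:ℤ) * (if j ∈ F' then τ j else τ j + 1)) :=
        Finset.prod_le_prod hfac0 hfac
      have hsplit2 : ∏ j ∈ J', ((g j:ℤ) * (if j ∈ F' then τ j else τ j + 1))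
          = (∏ j ∈ J', (g j:ℤ)) * ∏ j ∈ J', (if j ∈ F' then τ j else τ j + 1) :=
        Finset.prod_mul_distrib
      have hgprod0 : (0:ℤ) ≤ ∏ j ∈ J', (g j : ℤ) :=
        Finset.prod_nonneg fun j _ => by positivity
      have hτprod0 : (0:ℤ) ≤ ∏ j ∈ J', (if j ∈ F' then τ j else τ j + 1) := by
        apply Finset.prod_nonneg
        intro j hj
        have ht0 := (hτ j hj).1
        split
        · exact ht0
        · linarith
      have hlcmdvd : J.lcm a ∣ a s * J'.lcm A := by
        apply Finset.lcm_dvd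
        intro b hb
        by_cases hbs : b = s
        · subst hbs
          exact dvd_mul_right (a b) _
        · have hbJ' : b ∈ J' := Finset.mem_erase.mpr ⟨hbs, hb⟩
          have hab : a b = g b * A b := (hgA b).symm
          rw [hab]
          exact mul_dvd_mul (Nat.gcd_dvd_right _ _) (Finset.dvd_lcm hbJ')
      have hlcm'pos : 0 < J'.lcm A := Nat.pos_of_ne_zero (aux_lcm_ne_zero J' A hA1)
      have hlcmle : ((J.lcm a : ℕ) : ℤ) ≤ (a s : ℤ) * ((J'.lcm A : ℕ) : ℤ) := by
        have hp : 0 < a s * J'.lcm A := Nat.mul_pos (ha s hsJ) hlcm'pos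
        have := Nat.le_of_dvd hp hlcmdvd
        exact_mod_cast this
      rw [hprodsplit, hws, one_mul]
      calc ((J.lcm a : ℕ) : ℤ) * ∏ j ∈ J', (if j ∈ F then σ j else σ j + 1)
          ≤ ((a s : ℤ) * ((J'.lcm A : ℕ) : ℤ)) * ∏ j ∈ J', (if j ∈ F then σ j else σ j + 1) :=
            mul_le_mul_of_nonneg_right hlcmle (Finset.prod_nonneg hfac0)
        _ ≤ ((a s : ℤ) * ((J'.lcm A : ℕ) : ℤ)) *
              ((∏ j ∈ J', (g j:ℤ)) * ∏ j ∈ J', (if j ∈ F' then τ j else τ j + 1)) := by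
            apply mul_le_mul_of_nonneg_left _ (by positivity)
            rw [← hsplit2]
            exact hprodle
        _ = ((a s:ℤ) * ∏ j ∈ J', (g j : ℤ)) *
              (((J'.lcm A : ℕ) : ℤ) * ∏ j ∈ J', (if j ∈ F' then τ j else τ j + 1)) := by ring
        _ ≤ ((a s:ℤ) * ∏ j ∈ J', (g j : ℤ)) * ∏ j ∈ J', (A j : ℤ) := by
            apply mul_le_mul_of_nonneg_left hbd
            positivity
        _ = (a s : ℤ) * ∏ j ∈ J', ((g j:ℤ) * (A j:ℤ)) := by
            rw [Finset.prod_mul_distrib]; ring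
        _ = (a s : ℤ) * ∏ j ∈ J', (a j : ℤ) := by
            congr 1
            apply Finset.prod_congr rfl
            intro j _
            exact_mod_cast congrArg (Nat.cast (R := ℤ)) (hgA j)
        _ = ∏ j ∈ J, (a j : ℤ) := by rw [hJ'def]; exact Finset.mul_prod_erase J (fun j => ((a j : ℕ) : ℤ)) hsJ

/-- Strengthening of the first part of Lemma 5.2: the witness `k` can in
addition be chosen so that `k * r t ≡ 1 (mod a t)` for any prescribed index
`t`. -/
theorem stmt_4 (n : ℕ) (hn : 1 ≤ n) (a r : Fin n → ℕ)
    (hra : ∀ j, 1 ≤ r j ∧ r j < a j) (hcop : ∀ j, Nat.gcd (r j) (a j) = 1)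
    (t : Fin n) :
    ∃ k : ℤ, k * (r t : ℤ) ≡ 1 [ZMOD (a t : ℕ)] ∧
      (∀ j, ¬ ((a j : ℤ) ∣ k * (r j : ℤ))) ∧
      ∃ ρ : Fin n → ℤ,
        (∀ j, 1 ≤ ρ j ∧ ρ j < (a j : ℤ) ∧ ρ j ≡ k * (r j : ℤ) [ZMOD (a j : ℕ)]) ∧
        ((Finset.univ.lcm a : ℕ) : ℤ) * ∏ j, ρ j ≤ ∏ j, (a j : ℤ) := by
  have a2 : ∀ j, 2 ≤ a j := by
    intro j
    have h1 := (hra j).1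
    have h2 := (hra j).2
    omega
  obtain ⟨y, σ, h1, h2, h3, h4⟩ :=
    core n Finset.univ (by simp) a (fun j => (r j : ℤ)) (fun _ => 0) Finset.univ t
      (Finset.mem_univ t) (subset_refl _) (fun _ => Finset.mem_univ t)
      (fun j _ => by have := a2 j; omega)
      (fun j _ => Nat.isCoprime_iff_coprime.mpr (hcop j))
      (fun j _ => ⟨a2 j, rfl⟩)
  refine ⟨y, ?_, ?_, σ, ?_, ?_⟩
  · have hd := h3 (Finset.mem_univ t)
    rw [Int.modEq_iff_dvd]
    have he : (1 : ℤ) - y * (r t:ℤ) = -((r t:ℤ) * y - 1) := by ring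
    rw [he]
    exact dvd_neg.mpr hd
  · intro j hdvd
    obtain ⟨hs0, hs1, hs2⟩ := h1 j (Finset.mem_univ j)
    have hσd : (a j : ℤ) ∣ σ j := by
      have h0 : (a j : ℤ) ∣ ((r j : ℤ) * y + 0 - σ j) := hs2
      have h0' : (a j : ℤ) ∣ ((r j : ℤ) * y) := by rwa [mul_comm] at hdvd
      have := dvd_sub h0' h0
      simpa using this
    have h1' := h2 j (Finset.mem_univ j)
    have := Int.le_of_dvd (by linarith) hσd
    linarith
  · intro j
    obtain ⟨hs0, hs1, hs2⟩ := h1 j (Finset.mem_univ j)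
    refine ⟨h2 j (Finset.mem_univ j), hs1, ?_⟩
    have : ((a j : ℕ) : ℤ) ∣ (y * (r j : ℤ) - σ j) := by
      have h0 : (a j : ℤ) ∣ ((r j : ℤ) * y + 0 - σ j) := hs2
      rw [mul_comm]
      simpa using h0
    exact Int.modEq_iff_dvd.mpr this
  · simpa using h4
end

section
/- Let m ≥ 1, let k_1, …, k_m ≥ 1 be integers with n = k_1 + ⋯ + k_m, and let Λ be the n × n block-diagonal matrix whose j-th block is the k_j × k_j upper-triangular Jordan block with eigenvalue λ_j, where each λ_j ∈ ℂ is a primitive d_j-th root of unity (d_j ≥ 1, i.e. λ_j has multiplicative order exactly d_j). Then for a positive integer q the following are equivalent: (i) there exists x ∈ ℂ^n with x ≠ 0, Λ^q x = x, and Λ^p x ≠ x for every integer p with 0 < p < q; (ii) there exists a nonempty subset S ⊆ {1, …, m} with q = lcm of {d_j : j ∈ S}. -/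
/-- The `k × k` upper-triangular Jordan block with eigenvalue `lam`:
`lam` on the diagonal, `1` on the superdiagonal, `0` elsewhere. -/
def jordanBlock (k : ℕ) (lam : ℂ) : Matrix (Fin k) (Fin k) ℂ :=
  fun i j => if (j : ℕ) = (i : ℕ) then lam
    else if (j : ℕ) = (i : ℕ) + 1 then 1 else 0


lemma jordan_row_sum (k : ℕ) (lam : ℂ) (i : Fin k) (f : Fin k → ℂ) :
    ∑ r, jordanBlock k lam i r * f r =
      lam * f i + (if h : (i : ℕ) + 1 < k then f ⟨(i : ℕ) + 1, h⟩ else 0) := by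
  have step : ∀ r : Fin k, jordanBlock k lam i r * f r =
      (if r = i then lam * f r else 0) + (if (r : ℕ) = (i : ℕ) + 1 then f r else 0) := by
    intro r
    unfold jordanBlock
    rcases eq_or_ne (r : ℕ) (i : ℕ) with h | h
    · have : r = i := Fin.ext h
      simp [this]
    · have : r ≠ i := fun hh => h (by rw [hh])
      simp [h, this]
  rw [Finset.sum_congr rfl (fun r _ => step r), Finset.sum_add_distrib]
  congr 1
  · simp
  · split
    · rename_i h
      have : ∀ r : Fin k, ((r : ℕ) = (i : ℕ) + 1) ↔ r = (⟨(i : ℕ) + 1, h⟩ : Fin k) := by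
        intro r; constructor
        · intro hr; exact Fin.ext hr
        · intro hr; rw [hr]
      simp only [this]
      simp
    · rename_i h
      apply Finset.sum_eq_zero
      intro r _
      have hr : (r : ℕ) ≠ (i : ℕ) + 1 := by have := r.isLt; omega
      simp [hr]

lemma jordan_pow_low (k : ℕ) (lam : ℂ) (q : ℕ) :
    ∀ i l : Fin k, (l : ℕ) < (i : ℕ) → ((jordanBlock k lam) ^ q) i l = 0 := by
  induction q with
  | zero =>
    intro i l h
    have : i ≠ l := by intro hh; rw [hh] at h; omega
    simp [Matrix.one_apply, this]
  | succ q ih =>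
    intro i l h
    rw [pow_succ', Matrix.mul_apply, jordan_row_sum]
    rw [ih i l h]
    split
    · rename_i hlt
      rw [ih ⟨(i:ℕ)+1, hlt⟩ l (by simpa using Nat.lt_succ_of_lt h)]
      ring
    · ring

lemma jordan_pow_diag (k : ℕ) (lam : ℂ) (q : ℕ) (i : Fin k) :
    ((jordanBlock k lam) ^ q) i i = lam ^ q := by
  induction q with
  | zero => simp [Matrix.one_apply]
  | succ q ih =>
    rw [pow_succ', Matrix.mul_apply, jordan_row_sum, ih]
    split
    · rename_i hlt
      rw [jordan_pow_low k lam q ⟨(i:ℕ)+1, hlt⟩ i (by simp)]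
      ring
    · ring

lemma jordan_pow_sup (k : ℕ) (lam : ℂ) (q : ℕ) (i : Fin k) (h : (i : ℕ) + 1 < k) :
    ((jordanBlock k lam) ^ q) i ⟨(i : ℕ) + 1, h⟩ = q * lam ^ (q - 1) := by
  induction q with
  | zero =>
    have : i ≠ (⟨(i:ℕ)+1, h⟩ : Fin k) := by
      intro hh
      have := congrArg Fin.val hh
      simp at this
    simp [Matrix.one_apply, this]
  | succ q ih =>
    rw [pow_succ', Matrix.mul_apply, jordan_row_sum, ih]
    rw [dif_pos h]
    rw [jordan_pow_diag]
    cases q with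
    | zero => norm_num
    | succ s =>
      simp only [Nat.add_sub_cancel]
      push_cast
      ring

lemma mulVec_comp (k : ℕ) (P : Matrix (Fin k) (Fin k) ℂ) (y : Fin k → ℂ) (i : Fin k) :
    P.mulVec y i = ∑ l, P i l * y l := by
  simp [Matrix.mulVec, dotProduct]

/-- If `lam ^ q ≠ 1` then the only fixed vector of `(jordanBlock k lam) ^ q` is `0`. -/
lemma jordan_fixed_A (k : ℕ) (lam : ℂ) (q : ℕ) (hA : lam ^ q ≠ 1)
    (y : Fin k → ℂ) (hfix : ((jordanBlock k lam) ^ q).mulVec y = y) : y = 0 := by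
  have key : ∀ n : ℕ, ∀ i : Fin k, k ≤ (i : ℕ) + n → y i = 0 := by
    intro n
    induction n with
    | zero => intro i hi; exact absurd i.isLt (by omega)
    | succ n ih =>
      intro i hi
      have hrow : ((jordanBlock k lam) ^ q).mulVec y i = y i := congrFun hfix i
      rw [mulVec_comp] at hrow
      have hterm : ∀ l : Fin k, ((jordanBlock k lam) ^ q) i l * y l = if l = i then lam ^ q * y i else 0 := by
        intro l
        rcases lt_trichotomy (l : ℕ) (i : ℕ) with h | h | h
        · have : l ≠ i := by intro hh; rw [hh] at h; omega
          rw [jordan_pow_low k lam q i l h]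
          simp [this]
        · have hl : l = i := Fin.ext h
          rw [hl, jordan_pow_diag]
          simp
        · have : l ≠ i := by intro hh; rw [hh] at h; omega
          rw [ih l (by omega)]
          simp [this]
      rw [Finset.sum_congr rfl (fun l _ => hterm l)] at hrow
      simp at hrow
      have : (lam ^ q - 1) * y i = 0 := by rw [sub_mul, hrow]; ring
      rcases mul_eq_zero.mp this with h | h
      · exact absurd (by linear_combination h) hA
      · exact h
  funext i
  exact key k i (by omega)

/-- If `lam ^ q = 1` and `q * lam ^ (q-1) ≠ 0`, fixed vectors are supported at index 0. -/
lemma jordan_fixed_B (k : ℕ) (lam : ℂ) (q : ℕ) (hA : lam ^ q = 1)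
    (hB : (q : ℂ) * lam ^ (q - 1) ≠ 0)
    (y : Fin k → ℂ) (hfix : ((jordanBlock k lam) ^ q).mulVec y = y) :
    ∀ i : Fin k, (i : ℕ) ≠ 0 → y i = 0 := by
  set b : ℂ := (q : ℂ) * lam ^ (q - 1) with hb
  have key : ∀ n : ℕ, ∀ i : Fin k, k ≤ (i : ℕ) + n → (i : ℕ) ≠ 0 → y i = 0 := by
    intro n
    induction n with
    | zero => intro i hi; exact absurd i.isLt (by omega)
    | succ n ih =>
      intro i hi hi0
      have hlt : (i : ℕ) - 1 < k := by omega
      set i' : Fin k := ⟨(i : ℕ) - 1, hlt⟩ with hi'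
      have hii' : (i' : ℕ) + 1 = (i : ℕ) := by simp [hi']; omega
      have hi'lt : (i' : ℕ) + 1 < k := by rw [hii']; exact i.isLt
      have hieq : (⟨(i' : ℕ) + 1, hi'lt⟩ : Fin k) = i := Fin.ext hii'
      have hrow : ((jordanBlock k lam) ^ q).mulVec y i' = y i' := congrFun hfix i'
      rw [mulVec_comp] at hrow
      have hterm : ∀ l : Fin k, ((jordanBlock k lam) ^ q) i' l * y l =
          (if l = i' then y i' else 0) + (if l = i then b * y i else 0) := by
        intro l
        rcases lt_trichotomy (l : ℕ) (i' : ℕ) with h | h | h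
        · have h1 : l ≠ i' := by intro hh; rw [hh] at h; omega
          have h2 : l ≠ i := by intro hh; rw [hh] at h; simp [hi'] at h; omega
          rw [jordan_pow_low k lam q i' l h]
          simp [h1, h2]
        · have hl : l = i' := Fin.ext h
          have h2 : l ≠ i := by intro hh; subst hh; omega
          have h3 : i' ≠ i := hl ▸ h2
          rw [hl, jordan_pow_diag, hA]
          simp [h3]
        · rcases eq_or_lt_of_le (Nat.succ_le_of_lt h) with h' | h'
          · have hl : l = i := by apply Fin.ext; omega
            have h1 : l ≠ i' := by intro hh; rw [hh] at h; omega
            have h4 : (⟨(i' : ℕ) + 1, hi'lt⟩ : Fin k) ≠ i' := by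
              intro hh; have := congrArg Fin.val hh; simp at this
            rw [hl, ← hieq, jordan_pow_sup]
            simp [h4, hb]
          · have h1 : l ≠ i' := by intro hh; rw [hh] at h; omega
            have h2 : l ≠ i := by intro hh; rw [hh] at h'; omega
            rw [ih l (by omega) (by omega)]
            simp [h1, h2]
      rw [Finset.sum_congr rfl (fun l _ => hterm l), Finset.sum_add_distrib] at hrow
      simp at hrow
      rcases hrow with h | h
      · exact absurd h hB
      · exact h
  intro i hi0
  exact key k i (by omega) hi0

/-- Conversely, if `lam ^ q = 1` and `y` is supported at index 0 then `y` is fixed. -/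
lemma jordan_fixed_C (k : ℕ) (lam : ℂ) (q : ℕ) (hA : lam ^ q = 1)
    (y : Fin k → ℂ) (hsupp : ∀ i : Fin k, (i : ℕ) ≠ 0 → y i = 0) :
    ((jordanBlock k lam) ^ q).mulVec y = y := by
  funext i
  rw [mulVec_comp]
  have hterm : ∀ l : Fin k, ((jordanBlock k lam) ^ q) i l * y l =
      if l = i then y i else 0 := by
    intro l
    rcases lt_trichotomy (l : ℕ) (i : ℕ) with h | h | h
    · have h1 : l ≠ i := by intro hh; rw [hh] at h; omega
      rw [jordan_pow_low k lam q i l h]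
      simp [h1]
    · have hl : l = i := Fin.ext h
      rw [hl, jordan_pow_diag, hA]
      simp
    · have h1 : l ≠ i := by intro hh; rw [hh] at h; omega
      rw [hsupp l (by omega)]
      simp [h1]
  rw [Finset.sum_congr rfl (fun l _ => hterm l)]
  simp

lemma blockDiagonal'_mulVec {m : ℕ} {k : Fin m → ℕ}
    (B : ∀ j, Matrix (Fin (k j)) (Fin (k j)) ℂ)
    (x : ((j : Fin m) × Fin (k j)) → ℂ) (j : Fin m) (i : Fin (k j)) :
    (Matrix.blockDiagonal' B).mulVec x ⟨j, i⟩
      = (B j).mulVec (fun i' => x ⟨j, i'⟩) i := by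
  have : (Matrix.blockDiagonal' B).mulVec x ⟨j, i⟩
      = ∑ p : (j : Fin m) × Fin (k j), Matrix.blockDiagonal' B ⟨j, i⟩ p * x p := by
    simp [Matrix.mulVec, dotProduct]
  rw [this, ← Finset.univ_sigma_univ, Finset.sum_sigma]
  rw [Finset.sum_eq_single j]
  · simp [Matrix.mulVec, dotProduct, Matrix.blockDiagonal'_apply_eq]
  · intro j' _ hj'
    apply Finset.sum_eq_zero
    intro i' _
    rw [Matrix.blockDiagonal'_apply_ne B i i' (Ne.symm hj')]
    ring
  · intro h; exact absurd (Finset.mem_univ j) h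

lemma block_fixed_iff (k : ℕ) (hk : 0 < k) (lam : ℂ) (hlam0 : lam ≠ 0)
    (q : ℕ) (hq : 0 < q) (y : Fin k → ℂ) :
    ((jordanBlock k lam) ^ q).mulVec y = y ↔
      ((∀ i : Fin k, (i : ℕ) ≠ 0 → y i = 0) ∧ (y ⟨0, hk⟩ ≠ 0 → lam ^ q = 1)) := by
  have hB : (q : ℂ) * lam ^ (q - 1) ≠ 0 :=
    mul_ne_zero (Nat.cast_ne_zero.mpr (by omega)) (pow_ne_zero _ hlam0)
  constructor
  · intro hfix
    by_cases hA : lam ^ q = 1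
    · exact ⟨jordan_fixed_B k lam q hA hB y hfix, fun _ => hA⟩
    · have hy0 : y = 0 := jordan_fixed_A k lam q hA y hfix
      refine ⟨fun i _ => by rw [hy0]; rfl, fun h => absurd (by rw [hy0]; rfl) h⟩
  · rintro ⟨hs, hi⟩
    by_cases hy : y ⟨0, hk⟩ = 0
    · have hy0 : y = 0 := by
        funext i
        rcases eq_or_ne (i : ℕ) 0 with h | h
        · have : i = (⟨0, hk⟩ : Fin k) := Fin.ext h
          rw [this]; exact hy
        · exact hs i h
      rw [hy0, Matrix.mulVec_zero]
    · exact jordan_fixed_C k lam q (hi hy) y hs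

section Main

variable {m : ℕ} {k : Fin m → ℕ} 

lemma sigma_fixed_iff (m : ℕ) (k : Fin m → ℕ) (hk : ∀ j, 1 ≤ k j)
    (d : Fin m → ℕ) (hd : ∀ j, 1 ≤ d j)
    (lam : Fin m → ℂ) (hlam : ∀ j, IsPrimitiveRoot (lam j) (d j))
    (p : ℕ) (hp : 0 < p) (x : ((j : Fin m) × Fin (k j)) → ℂ) :
    ((Matrix.blockDiagonal' (fun j => jordanBlock (k j) (lam j))) ^ p).mulVec x = x ↔
      ∀ j : Fin m, (∀ i : Fin (k j), (i : ℕ) ≠ 0 → x ⟨j, i⟩ = 0) ∧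
        (x ⟨j, ⟨0, hk j⟩⟩ ≠ 0 → d j ∣ p) := by
  have hstep : ((Matrix.blockDiagonal' (fun j => jordanBlock (k j) (lam j))) ^ p).mulVec x = x ↔
      ∀ j, ((jordanBlock (k j) (lam j)) ^ p).mulVec (fun i => x ⟨j, i⟩)
        = (fun i => x ⟨j, i⟩) := by
    rw [← Matrix.blockDiagonal'_pow]
    constructor
    · intro h j
      funext i
      have := congrFun h ⟨j, i⟩
      rw [blockDiagonal'_mulVec] at this
      simpa using this
    · intro h
      funext p'
      obtain ⟨j, i⟩ := p'
      rw [blockDiagonal'_mulVec]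
      have := congrFun (h j) i
      simpa using this
  rw [hstep]
  apply forall_congr'
  intro j
  have hlam0 : lam j ≠ 0 := (hlam j).ne_zero (by have := hd j; omega)
  rw [block_fixed_iff (k j) (hk j) (lam j) hlam0 p hp]
  constructor
  · rintro ⟨h1, h2⟩
    exact ⟨h1, fun h => ((hlam j).pow_eq_one_iff_dvd p).mp (h2 h)⟩
  · rintro ⟨h1, h2⟩
    exact ⟨h1, fun h => ((hlam j).pow_eq_one_iff_dvd p).mpr (h2 h)⟩

end Main

/-- Characterization of the set `PE(Λ)` of periods of nonzero periodic points
of a block-diagonal Jordan matrix `Λ` whose `j`-th block is the `k j × k j`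
Jordan block with eigenvalue a primitive `d j`-th root of unity: a positive
integer `q` is such a period iff `q` is the lcm of `{d j : j ∈ S}` for some
nonempty set `S` of block indices. -/
theorem stmt_8 (m : ℕ) (hm : 1 ≤ m) (k : Fin m → ℕ) (hk : ∀ j, 1 ≤ k j)
    (d : Fin m → ℕ) (hd : ∀ j, 1 ≤ d j)
    (lam : Fin m → ℂ) (hlam : ∀ j, IsPrimitiveRoot (lam j) (d j))
    (Λ : Matrix ((j : Fin m) × Fin (k j)) ((j : Fin m) × Fin (k j)) ℂ)
    (hΛ : Λ = Matrix.blockDiagonal' (fun j => jordanBlock (k j) (lam j)))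
    (q : ℕ) (hq : 1 ≤ q) :
    (∃ x : ((j : Fin m) × Fin (k j)) → ℂ, x ≠ 0 ∧ (Λ ^ q).mulVec x = x ∧
        ∀ p : ℕ, 0 < p → p < q → (Λ ^ p).mulVec x ≠ x) ↔
      (∃ S : Finset (Fin m), S.Nonempty ∧ q = S.lcm d) := by
  subst hΛ
  classical
  constructor
  · rintro ⟨x, hx0, hper, hmin⟩
    rw [sigma_fixed_iff m k hk d hd lam hlam q (by omega) x] at hper
    set S : Finset (Fin m) := Finset.univ.filter (fun j => x ⟨j, ⟨0, hk j⟩⟩ ≠ 0) with hS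
    have hSne : S.Nonempty := by
      by_contra h
      apply hx0
      funext p'
      obtain ⟨j, i⟩ := p'
      rcases eq_or_ne (i : ℕ) 0 with h0 | h0
      · have hieq : i = (⟨0, hk j⟩ : Fin (k j)) := Fin.ext h0
        have hx : x ⟨j, ⟨0, hk j⟩⟩ = 0 := by
          by_contra hne
          exact h ⟨j, by simp [hS, hne]⟩
        rw [hieq, hx]
        simp
      · exact (hper j).1 i h0
    refine ⟨S, hSne, ?_⟩
    have hdvd : S.lcm d ∣ q :=
      Finset.lcm_dvd (fun j hj => (hper j).2 (by simpa [hS] using hj))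
    have hLpos : 0 < S.lcm d := by
      rcases Nat.eq_zero_or_pos (S.lcm d) with h | h
      · exfalso
        rw [Finset.lcm_eq_zero_iff] at h
        obtain ⟨j, hj, hj0⟩ := h
        have := hd j
        omega
      · exact h
    have hfixL : ((Matrix.blockDiagonal' (fun j => jordanBlock (k j) (lam j)))
        ^ (S.lcm d)).mulVec x = x := by
      rw [sigma_fixed_iff m k hk d hd lam hlam _ hLpos x]
      intro j
      exact ⟨(hper j).1, fun h => Finset.dvd_lcm (by simp [hS, h])⟩
    have hle : S.lcm d ≤ q := Nat.le_of_dvd (by omega) hdvd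
    rcases eq_or_lt_of_le hle with h | h
    · exact h.symm
    · exact absurd hfixL (hmin _ hLpos h)
  · rintro ⟨S, hSne, hqe⟩
    set x : ((j : Fin m) × Fin (k j)) → ℂ :=
      fun p => if p.1 ∈ S ∧ (p.2 : ℕ) = 0 then 1 else 0 with hxdef
    obtain ⟨j0, hj0⟩ := hSne
    refine ⟨x, ?_, ?_, ?_⟩
    · intro h
      have h0 : x ⟨j0, ⟨0, hk j0⟩⟩ = 0 := congrFun h _
      simp [hxdef, hj0] at h0
    · rw [sigma_fixed_iff m k hk d hd lam hlam q (by omega) x]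
      intro j
      constructor
      · intro i hi
        simp [hxdef, hi]
      · intro hne
        have hj : j ∈ S := by
          by_contra h
          simp [hxdef, h] at hne
        rw [hqe]
        exact Finset.dvd_lcm hj
    · intro p hp0 hpq hfix
      rw [sigma_fixed_iff m k hk d hd lam hlam p hp0 x] at hfix
      have hdvd : q ∣ p := by
        rw [hqe]
        apply Finset.lcm_dvd
        intro j hj
        exact (hfix j).2 (by simp [hxdef, hj])
      have := Nat.le_of_dvd hp0 hdvd
      omega
end

section
/- Let m ≥ 1, let k_1, …, k_m ≥ 1 be integers with n = k_1 + ⋯ + k_m, and let Λ be the n × n block-diagonal matrix whose j-th block is the k_j × k_j upper-triangular Jordan block with eigenvalue λ_j, where each λ_j ∈ ℂ is a primitive d_j-th root of unity (d_j ≥ 1). Set M(Λ) = lcm(d_1, …, d_m). Then: (a) whenever x ∈ ℂ^n is nonzero and q is the minimal positive integer with Λ^q x = x, q divides M(Λ); and (b) there exists a nonzero x ∈ ℂ^n whose minimal period under x ↦ Λx is exactly M(Λ). -/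
lemma jordanBlock_mul_apply (k : ℕ) (lam : ℂ) (A : Matrix (Fin k) (Fin k) ℂ)
    (i j : Fin k) :
    (jordanBlock k lam * A) i j =
      lam * A i j + (if h : (i : ℕ) + 1 < k then A ⟨(i : ℕ) + 1, h⟩ j else 0) := by
  rw [Matrix.mul_apply]
  by_cases h : (i : ℕ) + 1 < k
  · rw [dif_pos h]
    have key : ∀ l : Fin k, jordanBlock k lam i l * A l j =
        (if l = i then lam * A i j else 0) +
          (if l = (⟨(i : ℕ) + 1, h⟩ : Fin k) then A ⟨(i : ℕ) + 1, h⟩ j else 0) := by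
      intro l
      rcases eq_or_ne l i with rfl | hne
      · have h2 : l ≠ (⟨(l : ℕ) + 1, h⟩ : Fin k) := by
          simp [Fin.ext_iff]
        simp [jordanBlock, h2]
      · rcases eq_or_ne l (⟨(i : ℕ) + 1, h⟩ : Fin k) with rfl | hne2
        · have h1 : ¬ ((i : ℕ) + 1 = (i : ℕ)) := by omega
          simp [jordanBlock, hne, h1]
        · have h1 : (l : ℕ) ≠ (i : ℕ) := fun hc => hne (Fin.ext hc)
          have h2 : (l : ℕ) ≠ (i : ℕ) + 1 := fun hc => hne2 (Fin.ext hc)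
          simp [jordanBlock, h1, h2, hne, hne2]
    rw [Finset.sum_congr rfl (fun l _ => key l), Finset.sum_add_distrib,
      Finset.sum_ite_eq' Finset.univ i, Finset.sum_ite_eq' Finset.univ]
    simp
  · rw [dif_neg h]
    have key : ∀ l : Fin k, jordanBlock k lam i l * A l j =
        (if l = i then lam * A i j else 0) := by
      intro l
      rcases eq_or_ne l i with rfl | hne
      · simp [jordanBlock]
      · have h1 : (l : ℕ) ≠ (i : ℕ) := fun hc => hne (Fin.ext hc)
        have h2 : (l : ℕ) ≠ (i : ℕ) + 1 := by
          have := l.isLt; omega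
        simp [jordanBlock, h1, h2, hne]
    rw [Finset.sum_congr rfl (fun l _ => key l), Finset.sum_ite_eq' Finset.univ i]
    simp

lemma jordanBlock_pow_entries (k : ℕ) (lam : ℂ) (q : ℕ) :
    (∀ i j : Fin k, (j : ℕ) < (i : ℕ) → (jordanBlock k lam ^ q) i j = 0) ∧
    (∀ i : Fin k, (jordanBlock k lam ^ q) i i = lam ^ q) ∧
    (∀ i j : Fin k, (j : ℕ) = (i : ℕ) + 1 →
      (jordanBlock k lam ^ q) i j = (q : ℂ) * lam ^ (q - 1)) := by
  induction q with
  | zero =>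
    refine ⟨?_, ?_, ?_⟩
    · intro i j hij
      have : i ≠ j := fun hc => absurd (congrArg Fin.val hc) (by omega)
      simp [Matrix.one_apply, this]
    · intro i; simp
    · intro i j hij
      have : i ≠ j := by intro hc; subst hc; omega
      simp [Matrix.one_apply, this]
  | succ q ih =>
    obtain ⟨ih0, ih1, ih2⟩ := ih
    refine ⟨?_, ?_, ?_⟩
    · intro i j hij
      rw [pow_succ', jordanBlock_mul_apply, ih0 i j hij]
      by_cases h : (i : ℕ) + 1 < k
      · rw [dif_pos h, ih0 ⟨(i : ℕ) + 1, h⟩ j (by show (j:ℕ) < (i:ℕ)+1; omega)]; ring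
      · rw [dif_neg h]; ring
    · intro i
      rw [pow_succ', jordanBlock_mul_apply, ih1 i]
      by_cases h : (i : ℕ) + 1 < k
      · rw [dif_pos h, ih0 ⟨(i : ℕ) + 1, h⟩ i (by show (i:ℕ) < (i:ℕ)+1; omega)]
        ring
      · rw [dif_neg h]; ring
    · intro i j hij
      have h : (i : ℕ) + 1 < k := by have := j.isLt; omega
      have hji : j = (⟨(i : ℕ) + 1, h⟩ : Fin k) := Fin.ext (by simpa using hij)
      rw [pow_succ', jordanBlock_mul_apply, ih2 i j hij, dif_pos h, ← hji, ih1 j]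
      cases q with
      | zero => norm_num
      | succ s =>
        rw [show s + 1 - 1 = s from rfl, show s + 1 + 1 - 1 = s + 1 from rfl]
        push_cast
        ring

lemma jordan_fixed_of (k : ℕ) (lam : ℂ) (q : ℕ) (v : Fin k → ℂ)
    (h0 : ∀ i : Fin k, 0 < (i : ℕ) → v i = 0)
    (h1 : ∀ i : Fin k, lam ^ q * v i = v i) :
    (jordanBlock k lam ^ q).mulVec v = v := by
  obtain ⟨e0, e1, e2⟩ := jordanBlock_pow_entries k lam q
  funext i
  simp only [Matrix.mulVec, dotProduct]
  rw [Finset.sum_eq_single i]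
  · rw [e1 i]; exact h1 i
  · intro b _ hb
    rcases lt_trichotomy (b : ℕ) (i : ℕ) with hlt | heq | hgt
    · rw [e0 i b hlt]; ring
    · exact absurd (Fin.ext heq) hb
    · rw [h0 b (by omega)]; ring
  · intro h; exact absurd (Finset.mem_univ i) h

lemma jordan_fixed (k : ℕ) (lam : ℂ) (hlam : lam ≠ 0) (q : ℕ) (hq : 0 < q)
    (v : Fin k → ℂ) (hv : (jordanBlock k lam ^ q).mulVec v = v) :
    (∀ i : Fin k, 0 < (i : ℕ) → v i = 0) ∧ ∀ i : Fin k, lam ^ q * v i = v i := by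
  obtain ⟨e0, e1, e2⟩ := jordanBlock_pow_entries k lam q
  by_cases hz : v = 0
  · subst hz; simp
  have hrow : ∀ i : Fin k, ∑ j, (jordanBlock k lam ^ q) i j * v j = v i := by
    intro i
    have := congrFun hv i
    simpa [Matrix.mulVec, dotProduct] using this
  -- maximal element of the support
  have hs : (Finset.univ.filter (fun i => v i ≠ 0)).Nonempty := by
    rcases Function.ne_iff.mp hz with ⟨i, hi⟩
    exact ⟨i, by simpa using hi⟩
  set i₀ := (Finset.univ.filter (fun i => v i ≠ 0)).max' hs with hi₀def
  have hi₀ : v i₀ ≠ 0 := by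
    have := (Finset.univ.filter (fun i => v i ≠ 0)).max'_mem hs
    simpa using this
  have hmax : ∀ l : Fin k, i₀ < l → v l = 0 := by
    intro l hl
    by_contra hc
    have hmem : l ∈ Finset.univ.filter (fun i => v i ≠ 0) := by simpa using hc
    exact absurd (Finset.le_max' _ l hmem) (not_le.mpr hl)
  -- row i₀ gives lam ^ q = 1
  have hrow0 : lam ^ q * v i₀ = v i₀ := by
    have := hrow i₀
    rw [Finset.sum_eq_single i₀] at this
    · rw [e1 i₀] at this; exact this
    · intro b _ hb
      rcases lt_trichotomy (b : ℕ) (i₀ : ℕ) with hlt | heq | hgt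
      · rw [e0 i₀ b hlt]; ring
      · exact absurd (Fin.ext heq) hb
      · rw [hmax b (by exact Fin.lt_def.mpr hgt)]; ring
    · intro h; exact absurd (Finset.mem_univ i₀) h
  have hq1 : lam ^ q = 1 := by
    have hz2 : (lam ^ q - 1) * v i₀ = 0 := by linear_combination hrow0
    rcases mul_eq_zero.mp hz2 with h | h
    · exact sub_eq_zero.mp h
    · exact absurd h hi₀
  -- show i₀ = 0
  have hi₀0 : (i₀ : ℕ) = 0 := by
    by_contra hne
    have hpos : 0 < (i₀ : ℕ) := Nat.pos_of_ne_zero hne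
    have hlt : (i₀ : ℕ) - 1 < k := by have := i₀.isLt; omega
    set i' : Fin k := ⟨(i₀ : ℕ) - 1, hlt⟩ with hi'def
    have hsucc : (i₀ : ℕ) = (i' : ℕ) + 1 := by simp [hi'def]; omega
    have hne' : i' ≠ i₀ := by simp [Fin.ext_iff, hi'def]; omega
    have hterm : ∀ l : Fin k, (jordanBlock k lam ^ q) i' l * v l =
        (if l = i' then lam ^ q * v i' else 0) +
          (if l = i₀ then (q : ℂ) * lam ^ (q - 1) * v i₀ else 0) := by
      intro l
      rcases eq_or_ne l i' with h1 | h1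
      · rw [h1, if_pos rfl, if_neg hne', e1 i']; ring
      · rcases eq_or_ne l i₀ with h2 | h2
        · rw [h2, if_neg (fun hc => hne' hc.symm), if_pos rfl, e2 i' i₀ hsucc]; ring
        · rw [if_neg h1, if_neg h2]
          have hl1 : (l : ℕ) ≠ (i' : ℕ) := fun hc => h1 (Fin.ext hc)
          have hl2 : (l : ℕ) ≠ (i₀ : ℕ) := fun hc => h2 (Fin.ext hc)
          rcases lt_trichotomy (l : ℕ) (i' : ℕ) with hlt' | heq | hgt
          · rw [e0 i' l hlt']; ring
          · exact absurd heq hl1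
          · have : (i₀ : ℕ) < (l : ℕ) := by omega
            rw [hmax l (Fin.lt_def.mpr this)]; ring
    have := hrow i'
    rw [Finset.sum_congr rfl (fun l _ => hterm l), Finset.sum_add_distrib,
      Finset.sum_ite_eq' Finset.univ i', Finset.sum_ite_eq' Finset.univ i₀] at this
    simp only [Finset.mem_univ, if_true, hq1, one_mul] at this
    have hzero : (q : ℂ) * lam ^ (q - 1) * v i₀ = 0 := by linear_combination this
    rcases mul_eq_zero.mp hzero with h | h
    · rcases mul_eq_zero.mp h with h' | h'
      · have : q = 0 := by exact_mod_cast h'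
        omega
      · exact absurd h' (pow_ne_zero _ hlam)
    · exact absurd h hi₀
  have hsupp : ∀ i : Fin k, 0 < (i : ℕ) → v i = 0 := by
    intro i hi
    apply hmax
    exact Fin.lt_def.mpr (by omega)
  exact ⟨hsupp, fun i => by rw [hq1, one_mul]⟩

lemma blockDiagonal'_mulVec_apply {m : ℕ} {k : Fin m → ℕ}
    (f : ∀ j, Matrix (Fin (k j)) (Fin (k j)) ℂ) (x : ((j : Fin m) × Fin (k j)) → ℂ)
    (j : Fin m) (i : Fin (k j)) :
    (Matrix.blockDiagonal' f).mulVec x ⟨j, i⟩ =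
      (f j).mulVec (fun i' => x ⟨j, i'⟩) i := by
  simp only [Matrix.mulVec, dotProduct]
  rw [← Finset.univ_sigma_univ, Finset.sum_sigma]
  rw [Finset.sum_eq_single j]
  · apply Finset.sum_congr rfl
    intro i' _
    rw [Matrix.blockDiagonal'_apply_eq]
  · intro b _ hb
    apply Finset.sum_eq_zero
    intro i' _
    rw [Matrix.blockDiagonal'_apply_ne _ _ _ (Ne.symm hb)]
    ring
  · intro h; exact absurd (Finset.mem_univ j) h

lemma fixed_char {m : ℕ} (k : Fin m → ℕ) (lam : Fin m → ℂ)
    (hlam : ∀ j, lam j ≠ 0) (q : ℕ) (hq : 0 < q)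
    (x : ((j : Fin m) × Fin (k j)) → ℂ) :
    (Matrix.blockDiagonal' (fun j => jordanBlock (k j) (lam j)) ^ q).mulVec x = x ↔
      (∀ p : (j : Fin m) × Fin (k j), 0 < (p.2 : ℕ) → x p = 0) ∧
      ∀ p : (j : Fin m) × Fin (k j), lam p.1 ^ q * x p = x p := by
  rw [← Matrix.blockDiagonal'_pow]
  constructor
  · intro h
    have hj : ∀ j : Fin m, (jordanBlock (k j) (lam j) ^ q).mulVec
        (fun i => x ⟨j, i⟩) = fun i => x ⟨j, i⟩ := by
      intro j
      funext i
      have hb := blockDiagonal'_mulVec_apply ((fun j => jordanBlock (k j) (lam j)) ^ q) x j i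
      simp only [Pi.pow_apply] at hb
      rw [← hb]
      exact congrFun h ⟨j, i⟩
    refine ⟨?_, ?_⟩
    · rintro ⟨j, i⟩ hi
      exact (jordan_fixed (k j) (lam j) (hlam j) q hq _ (hj j)).1 i hi
    · rintro ⟨j, i⟩
      exact (jordan_fixed (k j) (lam j) (hlam j) q hq _ (hj j)).2 i
  · rintro ⟨h0, h1⟩
    funext p
    obtain ⟨j, i⟩ := p
    have hb := blockDiagonal'_mulVec_apply ((fun j => jordanBlock (k j) (lam j)) ^ q) x j i
    simp only [Pi.pow_apply] at hb
    rw [hb]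
    exact congrFun (jordan_fixed_of (k j) (lam j) q _
      (fun i' hi' => h0 ⟨j, i'⟩ hi') (fun i' => h1 ⟨j, i'⟩)) i

/-- For a block-diagonal Jordan matrix `Λ` with eigenvalues primitive
`d j`-th roots of unity and `M(Λ) = lcm (d 1, …, d m)`:
(a) the minimal period of any nonzero periodic point of `x ↦ Λ x` divides
`M(Λ)`, and (b) some nonzero vector has minimal period exactly `M(Λ)`. -/
theorem stmt_9 (m : ℕ) (hm : 1 ≤ m) (k : Fin m → ℕ) (hk : ∀ j, 1 ≤ k j)
    (d : Fin m → ℕ) (hd : ∀ j, 1 ≤ d j)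
    (lam : Fin m → ℂ) (hlam : ∀ j, IsPrimitiveRoot (lam j) (d j))
    (Λ : Matrix ((j : Fin m) × Fin (k j)) ((j : Fin m) × Fin (k j)) ℂ)
    (hΛ : Λ = Matrix.blockDiagonal' (fun j => jordanBlock (k j) (lam j)))
    (M : ℕ) (hM : M = Finset.univ.lcm d) :
    (∀ x : ((j : Fin m) × Fin (k j)) → ℂ, x ≠ 0 → ∀ q : ℕ, 0 < q →
        (Λ ^ q).mulVec x = x → (∀ p : ℕ, 0 < p → (Λ ^ p).mulVec x = x → q ≤ p) →
        q ∣ M) ∧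
      (∃ x : ((j : Fin m) × Fin (k j)) → ℂ, x ≠ 0 ∧ (Λ ^ M).mulVec x = x ∧
        ∀ p : ℕ, 0 < p → p < M → (Λ ^ p).mulVec x ≠ x) := by
  subst hΛ hM
  set M := Finset.univ.lcm d with hMdef
  have hlamne : ∀ j, lam j ≠ 0 := fun j => (hlam j).ne_zero (Nat.one_le_iff_ne_zero.mp (hd j))
  have hdvdM : ∀ j, d j ∣ M := fun j => Finset.dvd_lcm (Finset.mem_univ j)
  have hMpos : 0 < M := by
    refine Nat.pos_of_ne_zero ?_
    intro hc
    rw [hMdef, Finset.lcm_eq_zero_iff] at hc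
    obtain ⟨j, _, hj⟩ := hc
    have := hd j
    omega
  have hpow1 : ∀ (j : Fin m) (q : ℕ), lam j ^ q = 1 ↔ d j ∣ q := by
    intro j q
    exact ⟨fun h => (hlam j).dvd_of_pow_eq_one q h, fun h => by
      obtain ⟨c, rfl⟩ := h
      rw [pow_mul, (hlam j).pow_eq_one, one_pow]⟩
  constructor
  · intro x hx q hq hfix hmin
    obtain ⟨h0, h1⟩ := (fixed_char k lam hlamne q hq x).mp hfix
    set g := Nat.gcd q M with hgdef
    have hgpos : 0 < g := Nat.gcd_pos_of_pos_left M hq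
    have hfixg : (Matrix.blockDiagonal'
        (fun j => jordanBlock (k j) (lam j)) ^ g).mulVec x = x := by
      refine (fixed_char k lam hlamne g hgpos x).mpr ⟨h0, ?_⟩
      intro p
      by_cases hp : x p = 0
      · rw [hp, mul_zero]
      · have hq1 : lam p.1 ^ q = 1 := by
          have hz2 : (lam p.1 ^ q - 1) * x p = 0 := by linear_combination h1 p
          rcases mul_eq_zero.mp hz2 with h | h
          · exact sub_eq_zero.mp h
          · exact absurd h hp
        have hdq : d p.1 ∣ q := (hpow1 p.1 q).mp hq1
        have hdg : d p.1 ∣ g := Nat.dvd_gcd hdq (hdvdM p.1)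
        rw [(hpow1 p.1 g).mpr hdg, one_mul]
    have hle : q ≤ g := hmin g hgpos hfixg
    have hge : g ≤ q := Nat.le_of_dvd hq (Nat.gcd_dvd_left q M)
    have : q = g := le_antisymm hle hge
    rw [this]
    exact Nat.gcd_dvd_right q M
  · refine ⟨fun p => if (p.2 : ℕ) = 0 then 1 else 0, ?_, ?_, ?_⟩
    · intro hc
      have := congrFun hc ⟨⟨0, hm⟩, ⟨0, hk ⟨0, hm⟩⟩⟩
      simp at this
    · refine (fixed_char k lam hlamne M hMpos _).mpr ⟨?_, ?_⟩
      · intro p hp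
        have : (p.2 : ℕ) ≠ 0 := by omega
        simp [this]
      · intro p
        by_cases hp : (p.2 : ℕ) = 0
        · simp only [hp, if_pos]
          rw [(hpow1 p.1 M).mpr (hdvdM p.1), one_mul]
        · simp [hp]
    · intro p hp hpM hfix
      obtain ⟨_, h1⟩ := (fixed_char k lam hlamne p hp _).mp hfix
      have hall : ∀ j, d j ∣ p := by
        intro j
        have := h1 ⟨j, ⟨0, hk j⟩⟩
        simp only [mul_ite, mul_one, mul_zero, if_pos] at this
        exact (hpow1 j p).mp (by simpa using this)
      have : M ∣ p := Finset.lcm_dvd (fun j _ => hall j)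
      exact absurd (Nat.le_of_dvd hp this) (not_le.mpr hpM)
end

section
/- Let f : ℂ → ℂ be analytic at 0 with f(0) = 0, let λ = f'(0), and let q ≥ 1 be an integer such that λ = 1 or λ^q ≠ 1. Assume that the function z ↦ f(z) − z does not vanish identically on any neighborhood of 0. Then the function z ↦ f^{∘q}(z) − z (where f^{∘q} denotes the q-th iterate of f) also does not vanish identically on any neighborhood of 0, and its order of vanishing at 0 equals the order of vanishing at 0 of z ↦ f(z) − z. -/
open Filter

lemma iter_analytic (f : ℂ → ℂ) (hf : AnalyticAt ℂ f 0) (h0 : f 0 = 0) :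
    ∀ k, AnalyticAt ℂ f^[k] 0 ∧ f^[k] 0 = 0 := by
  intro k
  induction k with
  | zero => exact ⟨analyticAt_id, rfl⟩
  | succ k ih =>
    rw [Function.iterate_succ]
    refine ⟨?_, by simp [Function.comp, h0, ih.2]⟩
    have h1 : AnalyticAt ℂ f^[k] (f 0) := by rw [h0]; exact ih.1
    exact h1.comp hf

/-- Key induction: factorization of the iterates. -/
lemma key_ind (f h : ℂ → ℂ) (hf : AnalyticAt ℂ f 0) (h0 : f 0 = 0)
    (hh : AnalyticAt ℂ h 0) (m : ℕ)
    (heq : ∀ᶠ z in nhds (0 : ℂ), f z - z = z ^ (m + 1) * h z) :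
    ∀ k, ∃ u : ℂ → ℂ, AnalyticAt ℂ u 0 ∧
      u 0 = (∑ i ∈ Finset.range k, ((1 + (0:ℂ) ^ m * h 0) ^ (m + 1)) ^ i) * h 0 ∧
      ∀ᶠ z in nhds (0 : ℂ), f^[k] z - z = z ^ (m + 1) * u z := by
  intro k
  induction k with
  | zero =>
    exact ⟨0, analyticAt_const, by simp, by simp⟩
  | succ k ih =>
    obtain ⟨u, hu, hu0, huq⟩ := ih
    have htend : Filter.Tendsto f (nhds (0:ℂ)) (nhds (0:ℂ)) := by
      simpa [h0] using hf.continuousAt.tendsto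
    refine ⟨fun z => (1 + z ^ m * h z) ^ (m + 1) * u (f z) + h z, ?_, ?_, ?_⟩
    · have hu' : AnalyticAt ℂ u (f 0) := by rw [h0]; exact hu
      have huf : AnalyticAt ℂ (u ∘ f) 0 := hu'.comp hf
      exact ((((analyticAt_const.add ((analyticAt_id.pow m).mul hh)).pow
        (m+1)).mul huf)).add hh
    · simp only [h0, hu0]
      rw [geom_sum_succ]
      ring
    · filter_upwards [heq, htend.eventually huq, htend.eventually heq] with z hz hz2 hz3
      have hfz : f z = z * (1 + z ^ m * h z) := by
        have : f z = z + z ^ (m + 1) * h z := by linear_combination hz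
        rw [this]; ring
      have hstep : f^[k + 1] z - z = f z ^ (m + 1) * u (f z) + z ^ (m + 1) * h z := by
        rw [Function.iterate_succ_apply]
        linear_combination hz2 + hz
      rw [hstep, hfz, mul_pow]
      ring

/-- One-dimensional Shub–Sullivan lemma: if `f` is analytic at `0`, `f 0 = 0`,
`λ = f'(0)` satisfies `λ = 1` or `λ^q ≠ 1`, and `z ↦ f z - z` does not vanish
identically near `0`, then `z ↦ f^[q] z - z` does not vanish identically near
`0` and its order of vanishing at `0` equals that of `z ↦ f z - z`. -/
theorem stmt_10 (f : ℂ → ℂ) (hf : AnalyticAt ℂ f 0) (h0 : f 0 = 0)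
    (q : ℕ) (hq : 1 ≤ q) (hev : deriv f 0 = 1 ∨ (deriv f 0) ^ q ≠ 1)
    (hg : AnalyticAt ℂ (fun z => f z - z) 0)
    (hnv : ¬ (fun z => f z - z) =ᶠ[nhds (0 : ℂ)] 0) :
    ∃ hgq : AnalyticAt ℂ (fun z => f^[q] z - z) 0,
      (¬ (fun z => f^[q] z - z) =ᶠ[nhds (0 : ℂ)] 0) ∧ analyticOrderAt (fun z => f^[q] z - z) 0 = analyticOrderAt (fun z => f z - z) 0 := by
  -- the order is finite
  have hfin : analyticOrderAt (fun z => f z - z) 0 ≠ ⊤ := by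
    intro hc
    exact hnv (by filter_upwards [analyticOrderAt_eq_top.mp hc] with z hz using hz)
  obtain ⟨n, hn⟩ := WithTop.ne_top_iff_exists.mp hfin
  obtain ⟨h, hh, hh0, hheq⟩ := (hg.analyticOrderAt_eq_natCast (n := n)).mp hn.symm
  -- n ≥ 1
  have hn1 : n ≠ 0 := by
    intro h0n
    subst h0n
    have := hheq.self_of_nhds
    simp [h0] at this
    exact hh0 this.symm
  obtain ⟨m, rfl⟩ : ∃ m, n = m + 1 := ⟨n - 1, (Nat.succ_pred_eq_of_pos (Nat.pos_of_ne_zero hn1)).symm⟩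
  have hheq' : ∀ᶠ z in nhds (0:ℂ), f z - z = z ^ (m + 1) * h z := by
    filter_upwards [hheq] with z hz
    simpa [smul_eq_mul] using hz
  -- relation between deriv f 0 and h 0
  have hlam : deriv f 0 = 1 + (0:ℂ) ^ m * h 0 := by
    have hder : deriv (fun z => f z - z) 0 = deriv f 0 - 1 := by
      rw [deriv_fun_sub hf.differentiableAt differentiableAt_fun_id]
      simp
    have heq2 : deriv (fun z => f z - z) 0
        = deriv (fun z => z ^ (m + 1) * h z) 0 := by
      apply Filter.EventuallyEq.deriv_eq
      exact hheq'
    have hder2 : deriv (fun z : ℂ => z ^ (m + 1) * h z) 0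
        = ((m + 1 : ℕ) : ℂ) * 0 ^ m * h 0 := by
      rw [deriv_fun_mul (differentiableAt_pow (m+1)) hh.differentiableAt]
      simp [deriv_pow]
    have hcast : ((m + 1 : ℕ) : ℂ) * (0:ℂ) ^ m = (0:ℂ) ^ m := by
      cases m with
      | zero => simp
      | succ m => simp
    have : deriv f 0 - 1 = (0:ℂ) ^ m * h 0 := by
      rw [← hder, heq2, hder2, hcast]
    linear_combination this
  -- apply the key induction
  obtain ⟨u, hu, hu0, hueq⟩ := key_ind f h hf h0 hh m hheq' q
  set lam := deriv f 0 with hlamdef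
  have hlam' : (1 + (0:ℂ) ^ m * h 0) = lam := hlam.symm
  rw [hlam'] at hu0
  -- the leading coefficient is nonzero
  have hu0ne : u 0 ≠ 0 := by
    rw [hu0]
    apply mul_ne_zero _ hh0
    rcases hev with h1 | h1
    · rw [h1]
      simp only [one_pow, Finset.sum_const, Finset.card_range, nsmul_eq_mul, mul_one]
      exact Nat.cast_ne_zero.mpr (by omega)
    · have hlne1 : lam ≠ 1 := fun hc => h1 (by rw [hc, one_pow])
      have hm0 : m = 0 := by
        by_contra hm
        apply hlne1
        rw [← hlam', zero_pow hm, zero_mul, add_zero]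
      subst hm0
      simp only [zero_add, pow_one]
      rw [geom_sum_eq hlne1]
      apply div_ne_zero
      · exact sub_ne_zero.mpr h1
      · exact sub_ne_zero.mpr hlne1
  -- analyticity of the iterate difference
  have hitan : AnalyticAt ℂ (fun z => f^[q] z - z) 0 :=
    (iter_analytic f hf h0 q).1.sub analyticAt_id
  have h1 : analyticOrderAt (fun z => f^[q] z - z) 0 = (↑(m+1) : ℕ∞) := by
    rw [hitan.analyticOrderAt_eq_natCast]
    exact ⟨u, hu, hu0ne, by filter_upwards [hueq] with z hz; simpa [smul_eq_mul] using hz⟩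
  refine ⟨hitan, ?_, ?_⟩
  · intro hc
    have htop : analyticOrderAt (fun z => f^[q] z - z) 0 = ⊤ :=
      analyticOrderAt_eq_top.mpr (by filter_upwards [hc] with z hz using hz)
    rw [h1] at htop
    exact (ENat.coe_ne_top _) htop
  · rw [h1, ← hn]
    rfl
end

section
/- Let n ≥ 1 and q ≥ 2 be integers, let U ⊆ ℂ^n be open with 0 ∈ U, and let f : ℂ^n → ℂ^n be holomorphic on U with f(0) = 0 and derivative Λ = Df(0) at 0. Assume there exists r₀ > 0 with B̄(0, r₀) ⊆ U such that every x ∈ B̄(0, r₀) has its first q iterates under f defined and 0 is the unique fixed point of f and of f^{∘q} in B̄(0, r₀). Assume further that the linear map x ↦ Λx has NO periodic point of minimal period q, i.e. there is no v ≠ 0 with Λ^q v = v and Λ^p v ≠ v for all 0 < p < q. Then there exist r > 0 with B̄(0, r) ⊆ U and ε > 0 such that for every map g : ℂ^n → ℂ^n holomorphic on U with sup_{z ∈ B(0,r)} ‖g(z) − f(z)‖ < ε, there is no point x ∈ B(0, r) with g^{∘j}(x) ∈ B(0, r) for all 0 ≤ j < q, g^{∘q}(x) = x and g^{∘p}(x)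 ≠ x for all 0 < p < q. -/
open Metric Set Function
open Fin.NatCast

section helpers
variable {E : Type*} [NormedAddCommGroup E] [NormedSpace ℂ E]

/-- Schwarz-type estimate with closed bound. -/
lemma schwarz_sub {F : ℂ → E} {R B : ℝ} (hR : 0 < R)
    (hd : DifferentiableOn ℂ F (ball 0 R))
    (hB : ∀ t ∈ ball (0:ℂ) R, ‖F t - F 0‖ ≤ B) {z : ℂ} (hz : z ∈ ball (0:ℂ) R) :
    ‖F z - F 0‖ ≤ B / R * ‖z‖ := by
  have key : ∀ B' : ℝ, B < B' → ‖F z - F 0‖ ≤ B' / R * ‖z‖ := by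
    intro B' hB'
    have hm : MapsTo F (ball 0 R) (ball (F 0) B') := fun t ht => by
      rw [mem_ball, dist_eq_norm]; exact lt_of_le_of_lt (hB t ht) hB'
    simpa [dist_eq_norm] using Complex.dist_le_div_mul_dist_of_mapsTo_ball hd (hm.mono_right ball_subset_closedBall) hz
  rcases eq_or_ne z 0 with rfl | hz0
  · simp
  · have hzpos : 0 < ‖z‖ := norm_pos_iff.mpr hz0
    have ht : 0 < ‖z‖ / R := div_pos hzpos hR
    have : ‖F z - F 0‖ / (‖z‖ / R) ≤ B := by
      refine le_of_forall_gt_imp_ge_of_dense fun B' hB' => ?_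
      rw [div_le_iff₀ ht]
      calc ‖F z - F 0‖ ≤ B' / R * ‖z‖ := key B' hB'
        _ = B' * (‖z‖ / R) := by ring
    calc ‖F z - F 0‖ = ‖F z - F 0‖ / (‖z‖ / R) * (‖z‖ / R) := by
          rw [div_mul_cancel₀ _ ht.ne']
      _ ≤ B * (‖z‖ / R) := by
          exact mul_le_mul_of_nonneg_right this ht.le
      _ = B / R * ‖z‖ := by ring

lemma schwarz_dslope {F : ℂ → E} {R B : ℝ} (hR : 0 < R)
    (hd : DifferentiableOn ℂ F (ball 0 R))
    (hB : ∀ t ∈ ball (0:ℂ) R, ‖F t - F 0‖ ≤ B) {z : ℂ} (hz : z ∈ ball (0:ℂ) R) :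
    ‖dslope F 0 z‖ ≤ B / R := by
  have key : ∀ B' : ℝ, B < B' → ‖dslope F 0 z‖ ≤ B' / R := by
    intro B' hB'
    have hm : MapsTo F (ball 0 R) (ball (F 0) B') := fun t ht => by
      rw [mem_ball, dist_eq_norm]; exact lt_of_le_of_lt (hB t ht) hB'
    exact Complex.norm_dslope_le_div_of_mapsTo_ball hd (hm.mono_right ball_subset_closedBall) hz
  have : ‖dslope F 0 z‖ * R ≤ B := by
    refine le_of_forall_gt_imp_ge_of_dense fun B' hB' => ?_
    rw [← le_div_iff₀ hR]
    exact key B' hB'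
  rw [le_div_iff₀ hR]; exact this

/-- quadratic bound near a point where the function and its derivative vanish -/
lemma quad_bound [CompleteSpace E] {h : E → E} {r₀ M : ℝ} (hr : 0 < r₀)
    (hd : DifferentiableOn ℂ h (ball 0 r₀)) (h0 : h 0 = 0)
    (hD : HasFDerivAt h (0 : E →L[ℂ] E) 0)
    (hM : ∀ z ∈ ball (0:E) r₀, ‖h z‖ ≤ M) :
    ∀ x ∈ ball (0:E) r₀, ‖h x‖ ≤ M / r₀^2 * ‖x‖^2 := by
  intro x hx
  have hM0 : 0 ≤ M := le_trans (norm_nonneg _) (hM 0 (mem_ball_self hr))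
  rcases eq_or_ne x 0 with rfl | hx0
  · rw [h0, norm_zero]; positivity
  have hxpos : 0 < ‖x‖ := norm_pos_iff.mpr hx0
  set R₁ : ℝ := r₀ / ‖x‖ with hR₁def
  have hR₁ : 0 < R₁ := div_pos hr hxpos
  have h1R : 1 < R₁ := (one_lt_div hxpos).mpr (mem_ball_zero_iff.mp hx)
  set φ : ℂ → E := fun t => h (t • x) with hφdef
  have hmapsto : ∀ t : ℂ, t ∈ ball (0:ℂ) R₁ → t • x ∈ ball (0:E) r₀ := by
    intro t ht
    rw [mem_ball_zero_iff] at ht ⊢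
    calc ‖t • x‖ = ‖t‖ * ‖x‖ := norm_smul t x
      _ < R₁ * ‖x‖ := by exact mul_lt_mul_of_pos_right ht hxpos
      _ = r₀ := div_mul_cancel₀ _ hxpos.ne'
  have hφd : DifferentiableOn ℂ φ (ball 0 R₁) := by
    apply hd.comp ((differentiable_id.smul_const x).differentiableOn)
    intro t ht; exact hmapsto t ht
  have hφ0 : φ 0 = 0 := by simp [hφdef, h0]
  have hφB : ∀ t ∈ ball (0:ℂ) R₁, ‖φ t - φ 0‖ ≤ M := by
    intro t ht; rw [hφ0, sub_zero]; exact hM _ (hmapsto t ht)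
  -- derivative of φ at 0 is 0
  have hsmul : HasDerivAt (fun t : ℂ => t • x) x 0 := by
    simpa using (hasDerivAt_id (0:ℂ)).smul_const x
  have hD' : HasFDerivAt h (0 : E →L[ℂ] E) ((fun t : ℂ => t • x) 0) := by
    simpa using hD
  have hφD : HasDerivAt φ 0 0 := by
    simpa [hφdef, Function.comp_def] using hD'.comp_hasDerivAt (0:ℂ) hsmul
  set G : ℂ → E := dslope φ 0 with hGdef
  have hGd : DifferentiableOn ℂ G (ball 0 R₁) :=
    (Complex.differentiableOn_dslope (ball_mem_nhds _ hR₁)).mpr hφd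
  have hG0 : G 0 = 0 := by
    rw [hGdef, dslope_same]
    exact hφD.deriv
  have hGb : ∀ t ∈ ball (0:ℂ) R₁, ‖G t - G 0‖ ≤ M / R₁ := by
    intro t ht
    rw [hG0, sub_zero]
    exact schwarz_dslope hR₁ hφd hφB ht
  have h1m : (1:ℂ) ∈ ball (0:ℂ) R₁ := by
    rw [mem_ball_zero_iff]; simpa using h1R
  have hG1 : ‖G 1 - G 0‖ ≤ (M / R₁) / R₁ * ‖(1:ℂ)‖ := schwarz_sub hR₁ hGd hGb h1m
  have hφ1 : φ 1 = h x := by simp [hφdef]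
  have hkey : h x = (1 - 0 : ℂ) • G 1 := by
    have := sub_smul_dslope φ 0 1
    rw [hφ0, sub_zero, hφ1] at this
    rw [sub_zero] at this
    rw [hGdef]
    simpa using this.symm
  have : ‖h x‖ ≤ M / R₁ / R₁ := by
    rw [hG0, sub_zero] at hG1
    calc ‖h x‖ = ‖G 1‖ := by rw [hkey]; simp
      _ ≤ M / R₁ / R₁ * ‖(1:ℂ)‖ := hG1
      _ = M / R₁ / R₁ := by simp
  refine this.trans (le_of_eq ?_)
  rw [hR₁def]
  field_simp


/-- Lipschitz estimate on an inner ball from a sup bound on a larger ball. -/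
lemma lip_of_bound {u : E → E} {R B : ℝ} (hR : 0 < R)
    (hd : DifferentiableOn ℂ u (ball 0 (3*R)))
    (hB : ∀ z ∈ ball (0:E) (3*R), ‖u z‖ ≤ B)
    {x y : E} (hx : x ∈ closedBall 0 R) (hy : y ∈ closedBall 0 R) :
    ‖u y - u x‖ ≤ 2*B/R * ‖y - x‖ := by
  have h3R : (0:ℝ) < 3*R := by linarith
  have hB0 : 0 ≤ B := le_trans (norm_nonneg _) (hB 0 (mem_ball_self h3R))
  rw [mem_closedBall_zero_iff] at hx hy
  have hxm : x ∈ ball (0:E) (3*R) := mem_ball_zero_iff.mpr (by linarith)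
  have hym : y ∈ ball (0:E) (3*R) := mem_ball_zero_iff.mpr (by linarith)
  rcases le_or_gt R ‖y - x‖ with hbig | hsmall
  · calc ‖u y - u x‖ ≤ ‖u y‖ + ‖u x‖ := norm_sub_le _ _
      _ ≤ B + B := add_le_add (hB y hym) (hB x hxm)
      _ = 2*B/R * R := by field_simp; ring
      _ ≤ 2*B/R * ‖y - x‖ := by
          apply mul_le_mul_of_nonneg_left hbig (by positivity)
  rcases eq_or_ne y x with rfl | hne
  · simp
  have hnorm : 0 < ‖y - x‖ := norm_pos_iff.mpr (sub_ne_zero.mpr hne)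
  set R' : ℝ := 2*R/‖y - x‖ with hR'def
  have hR' : 0 < R' := by positivity
  have h1R' : 1 < R' := by
    rw [hR'def, lt_div_iff₀ hnorm]; linarith
  set φ : ℂ → E := fun t => u (x + t • (y - x)) with hφdef
  have hmapsto : ∀ t : ℂ, t ∈ ball (0:ℂ) R' → x + t • (y - x) ∈ ball (0:E) (3*R) := by
    intro t ht
    rw [mem_ball_zero_iff] at ht ⊢
    calc ‖x + t • (y - x)‖ ≤ ‖x‖ + ‖t‖ * ‖y - x‖ := by
          refine (norm_add_le _ _).trans ?_
          rw [norm_smul]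
      _ < R + R' * ‖y - x‖ := by
          refine add_lt_add_of_le_of_lt hx ?_
          exact mul_lt_mul_of_pos_right ht hnorm
      _ = R + 2*R := by rw [hR'def]; field_simp
      _ = 3*R := by ring
  have hφd : DifferentiableOn ℂ φ (ball 0 R') := by
    apply hd.comp
    · exact (differentiable_const x |>.add (differentiable_id.smul_const (y - x))).differentiableOn
    · intro t ht; exact hmapsto t ht
  have hφB : ∀ t ∈ ball (0:ℂ) R', ‖φ t - φ 0‖ ≤ 2*B := by
    intro t ht
    have h0m : (0:ℂ) ∈ ball (0:ℂ) R' := mem_ball_self hR'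
    calc ‖φ t - φ 0‖ ≤ ‖φ t‖ + ‖φ 0‖ := norm_sub_le _ _
      _ ≤ B + B := add_le_add (hB _ (hmapsto t ht)) (hB _ (hmapsto 0 h0m))
      _ = 2*B := by ring
  have h1m : (1:ℂ) ∈ ball (0:ℂ) R' := by
    rw [mem_ball_zero_iff]; simpa using h1R'
  have := schwarz_sub hR' hφd hφB h1m
  have hφ1 : φ 1 = u y := by simp [hφdef]
  have hφ0 : φ 0 = u x := by simp [hφdef]
  rw [hφ1, hφ0] at this
  calc ‖u y - u x‖ ≤ 2*B / R' * ‖(1:ℂ)‖ := this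
    _ = 2*B / R' := by simp
    _ = B/R * ‖y - x‖ := by rw [hR'def]; field_simp
    _ ≤ 2*B/R * ‖y - x‖ := by
        apply mul_le_mul_of_nonneg_right _ hnorm.le
        gcongr
        linarith


/-- If `Λ` has no periodic vector of minimal period `q`, then all fixed points of
`Λ^q` are fixed by `Λ^d` for some single proper divisor `d` of `q`. -/
lemma exists_proper_divisor_period {E : Type*} [NormedAddCommGroup E] [NormedSpace ℂ E]
    (Λ : E →L[ℂ] E) (q : ℕ) (hq : 2 ≤ q)
    (hnoper : ¬ ∃ v : E, v ≠ 0 ∧ (Λ ^ q) v = v ∧ ∀ p : ℕ, 0 < p → p < q → (Λ ^ p) v ≠ v) :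
    ∃ d : ℕ, 0 < d ∧ d < q ∧ d ∣ q ∧ ∀ v : E, (Λ ^ q) v = v → (Λ ^ d) v = v := by
  classical
  set K : ℕ → Submodule ℂ E := fun p => LinearMap.ker ((((Λ ^ p : E →L[ℂ] E) - 1 : E →L[ℂ] E)) : E →ₗ[ℂ] E) with hKdef
  have hKmem : ∀ (p : ℕ) (v : E), v ∈ K p ↔ (Λ ^ p) v = v := by
    intro p v
    rw [hKdef]
    simp [LinearMap.mem_ker, sub_eq_zero, Module.End.coe_pow]
  have hcover : ∀ v ∈ K q, ∃ i : {d // d ∈ q.properDivisors}, v ∈ K i.val := by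
    intro v hv
    rcases eq_or_ne v 0 with rfl | hv0
    · refine ⟨⟨1, Nat.one_mem_properDivisors_iff_one_lt.mpr (by omega)⟩, ?_⟩
      exact Submodule.zero_mem _
    have hvq : (Λ ^ q) v = v := (hKmem q v).mp hv
    have hex : ∃ p, 0 < p ∧ (Λ ^ p) v = v := ⟨q, by omega, hvq⟩
    set p₀ := Nat.find hex with hp₀def
    have hp₀ := Nat.find_spec hex
    have hmin : ∀ p, p < p₀ → ¬ (0 < p ∧ (Λ ^ p) v = v) := fun p hp => Nat.find_min hex hp
    have hmul : ∀ k : ℕ, (Λ ^ (p₀ * k)) v = v := by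
      intro k
      induction k with
      | zero => simp
      | succ k ih =>
        have : p₀ * (k + 1) = p₀ * k + p₀ := by ring
        rw [this, pow_add, ContinuousLinearMap.mul_apply, hp₀.2, ih]
    have hrem : (Λ ^ (q % p₀)) v = v := by
      have hsplit : q % p₀ + p₀ * (q / p₀) = q := by
        rw [Nat.add_comm]; exact Nat.div_add_mod q p₀
      have : (Λ ^ q) v = (Λ ^ (q % p₀)) ((Λ ^ (p₀ * (q / p₀))) v) := by
        rw [← ContinuousLinearMap.mul_apply, ← pow_add, hsplit]
      rw [hmul (q / p₀)] at this
      rw [← this, hvq]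
    have hdvd : p₀ ∣ q := by
      rcases Nat.eq_zero_or_pos (q % p₀) with h0 | hpos
      · exact Nat.dvd_of_mod_eq_zero h0
      · exact absurd ⟨hpos, hrem⟩ (hmin _ (Nat.mod_lt q hp₀.1))
    have hle : p₀ ≤ q := Nat.find_min' hex ⟨by omega, hvq⟩
    have hlt : p₀ < q := by
      rcases lt_or_eq_of_le hle with h | h
      · exact h
      · exfalso
        apply hnoper
        exact ⟨v, hv0, hvq, fun p hp hpq heq => hmin p (h ▸ hpq) ⟨hp, heq⟩⟩
    exact ⟨⟨p₀, Nat.mem_properDivisors.mpr ⟨hdvd, hlt⟩⟩, (hKmem _ _).mpr hp₀.2⟩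
  set V : {d // d ∈ q.properDivisors} → Subspace ℂ (K q) :=
    fun i => (K i.val).comap (K q).subtype with hVdef
  have hcov : ⋃ i, (V i : Set (K q)) = Set.univ := by
    ext ⟨v, hv⟩
    simp only [Set.mem_iUnion, Set.mem_univ, iff_true]
    obtain ⟨i, hi⟩ := hcover v hv
    refine ⟨i, ?_⟩
    simpa [hVdef, Submodule.mem_comap] using hi
  obtain ⟨i, hi⟩ := Subspace.exists_eq_top_of_iUnion_eq_univ hcov
  obtain ⟨hdvd, hlt⟩ := Nat.mem_properDivisors.mp i.2
  have hpos : 0 < i.1 := by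
    rcases Nat.eq_zero_or_pos i.1 with h0 | h; · rw [h0] at hdvd; omega
    exact h
  refine ⟨i.1, hpos, hlt, hdvd, fun v hv => ?_⟩
  have hvK : v ∈ K q := (hKmem q v).mpr hv
  have : (⟨v, hvK⟩ : K q) ∈ V i := by rw [hi]; trivial
  exact (hKmem i.1 v).mp (by simpa [hVdef, Submodule.mem_comap] using this)


/-- Quantitative injectivity: an approximate `Λ`-cycle of length `q` whose `d`-step
sums telescope to zero is controlled by the cycle defect. -/
lemma cycle_defect_bound {E : Type*} [NormedAddCommGroup E] [NormedSpace ℂ E]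
    [FiniteDimensional ℂ E] (Λ : E →L[ℂ] E) (q d : ℕ) [NeZero q]
    (hd0 : 0 < d) (hdvd : d ∣ q)
    (hfix : ∀ v : E, (Λ ^ q) v = v → (Λ ^ d) v = v) :
    ∃ c : ℝ, 0 < c ∧ ∀ w : Fin q → E,
      (∑ j ∈ Finset.range (q / d), w ((j * d : ℕ) : Fin q)) = 0 →
      ‖w‖ ≤ c * ‖(fun i => w (i + 1) - Λ (w i) : Fin q → E)‖ := by
  classical
  have hqpos : 0 < q := Nat.pos_of_ne_zero (NeZero.ne q)
  set m := q / d with hmdef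
  have hmd : m * d = q := Nat.div_mul_cancel hdvd
  have hmpos : 0 < m := Nat.div_pos (Nat.le_of_dvd hqpos hdvd) hd0
  set Cmap : (Fin q → E) →ₗ[ℂ] (Fin q → E) :=
    { toFun := fun w i => w (i + 1) - Λ (w i)
      map_add' := by intro a b; funext i; simp [Pi.add_apply]; abel
      map_smul' := by intro a b; funext i; simp [Pi.smul_apply, smul_sub] } with hCdef
  set Tmap : (Fin q → E) →ₗ[ℂ] E :=
    { toFun := fun w => ∑ j ∈ Finset.range m, w ((j * d : ℕ) : Fin q)
      map_add' := by intro a b; simp [Finset.sum_add_distrib]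
      map_smul' := by intro a b; simp [Finset.smul_sum] } with hTdef
  set P : (Fin q → E) →ₗ[ℂ] (Fin q → E) × E := Cmap.prod Tmap with hPdef
  have hcore : ∀ w : Fin q → E, P w = 0 → w = 0 := by
    intro w hw
    have hC : ∀ i : Fin q, w (i + 1) = Λ (w i) := by
      intro i
      have := congrFun (congrArg Prod.fst hw) i
      simpa [hPdef, hCdef, sub_eq_zero] using this
    have hT : ∑ j ∈ Finset.range m, w ((j * d : ℕ) : Fin q) = 0 := by
      have := congrArg Prod.snd hw
      simpa [hPdef, hTdef] using this
    have claim : ∀ k : ℕ, w ((k : ℕ) : Fin q) = (Λ ^ k) (w 0) := by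
      intro k
      induction k with
      | zero => simp
      | succ k ih =>
        have hcast : ((k + 1 : ℕ) : Fin q) = ((k : ℕ) : Fin q) + 1 := by push_cast; ring
        rw [hcast, hC, ih, ← ContinuousLinearMap.mul_apply, ← pow_succ']
    have hwq : (Λ ^ q) (w 0) = w 0 := by
      have := claim q
      rw [Fin.natCast_self] at this
      exact this.symm
    have hwd : (Λ ^ d) (w 0) = w 0 := hfix _ hwq
    have hmul : ∀ j : ℕ, (Λ ^ (j * d)) (w 0) = w 0 := by
      intro j
      induction j with
      | zero => simp
      | succ j ih =>
        have : (j + 1) * d = j * d + d := by ring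
        rw [this, pow_add, ContinuousLinearMap.mul_apply, hwd, ih]
    have hsum : ∑ j ∈ Finset.range m, w ((j * d : ℕ) : Fin q) = m • (w 0) := by
      rw [Finset.sum_congr rfl (fun j _ => by rw [claim (j * d), hmul j])]
      simp
    rw [hsum] at hT
    have hw0 : w 0 = 0 := by
      have : (m : ℂ) • (w 0) = 0 := by rw [Nat.cast_smul_eq_nsmul]; exact hT
      rcases smul_eq_zero.mp this with h | h
      · exact absurd (Nat.cast_eq_zero.mp h) (by omega)
      · exact h
    funext i
    have := claim i.val
    rw [Fin.cast_val_eq_self, hw0, map_zero] at this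
    simp [this]
  have hinj : Function.Injective P := by
    intro a b hab
    have := hcore (a - b) (by rw [map_sub, hab, sub_self])
    exact sub_eq_zero.mp this
  set e := LinearEquiv.ofInjective P hinj with hedef
  set S := LinearMap.toContinuousLinearMap e.symm.toLinearMap with hSdef
  refine ⟨‖S‖ + 1, by positivity, fun w hT => ?_⟩
  have hPw : P w = (Cmap w, 0) := by
    rw [hPdef]
    ext i
    · rfl
    · simpa [hTdef] using hT
  have hnorm : ‖P w‖ = ‖Cmap w‖ := by
    rw [hPw, Prod.norm_def]
    simp [max_eq_left (norm_nonneg _)]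
  have hwS : w = S (e w) := by
    have h1 : S (e w) = e.symm.toLinearMap (e w) := by
      rw [hSdef, LinearMap.coe_toContinuousLinearMap']
    rw [h1]
    exact (e.symm_apply_apply w).symm
  have hewnorm : ‖e w‖ = ‖P w‖ := by
    rw [hedef]
    rw [Submodule.coe_norm]
    congr 1
  calc ‖w‖ = ‖S (e w)‖ := by rw [← hwS]
    _ ≤ ‖S‖ * ‖e w‖ := S.le_opNorm _
    _ = ‖S‖ * ‖Cmap w‖ := by rw [hewnorm, hnorm]
    _ ≤ (‖S‖ + 1) * ‖Cmap w‖ := by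
        apply mul_le_mul_of_nonneg_right (by linarith) (norm_nonneg _)
    _ = (‖S‖ + 1) * ‖(fun i => w (i + 1) - Λ (w i) : Fin q → E)‖ := by rw [hCdef]; rfl

end helpers

set_option maxHeartbeats 2000000 in
/-- Shub–Sullivan / Chow–Mallet-Paret–Yorke direction of Theorem 1.2
(case `q ≥ 2`): if the linear part `Λ = Df(0)` of a holomorphic germ `f`
fixing `0`, with `0` an isolated fixed point of `f` and of `f^q`, has no
periodic point of minimal period `q`, then all sufficiently small holomorphic
perturbations of `f` have no periodic orbit of minimal period `q` contained
in a suitable ball around `0`. -/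
theorem stmt_12 (n : ℕ) (hn : 1 ≤ n) (q : ℕ) (hq : 2 ≤ q)
    (U : Set (EuclideanSpace ℂ (Fin n))) (hU : IsOpen U) (h0U : (0 : EuclideanSpace ℂ (Fin n)) ∈ U)
    (f : EuclideanSpace ℂ (Fin n) → EuclideanSpace ℂ (Fin n))
    (hf : DifferentiableOn ℂ f U) (hf0 : f 0 = 0)
    (Λ : EuclideanSpace ℂ (Fin n) →L[ℂ] EuclideanSpace ℂ (Fin n)) (hΛ : Λ = fderiv ℂ f 0)
    (hr0 : ∃ r₀ > (0 : ℝ), closedBall (0 : EuclideanSpace ℂ (Fin n)) r₀ ⊆ U ∧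
      (∀ x ∈ closedBall (0 : EuclideanSpace ℂ (Fin n)) r₀, ∀ j < q, f^[j] x ∈ U) ∧
      (∀ x ∈ closedBall (0 : EuclideanSpace ℂ (Fin n)) r₀, f x = x → x = 0) ∧
      (∀ x ∈ closedBall (0 : EuclideanSpace ℂ (Fin n)) r₀, f^[q] x = x → x = 0))
    (hnoper : ¬ ∃ v : EuclideanSpace ℂ (Fin n), v ≠ 0 ∧ (Λ ^ q) v = v ∧
      ∀ p : ℕ, 0 < p → p < q → (Λ ^ p) v ≠ v) :
    ∃ r > (0 : ℝ), closedBall (0 : EuclideanSpace ℂ (Fin n)) r ⊆ U ∧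
      ∃ ε > (0 : ℝ), ∀ g : EuclideanSpace ℂ (Fin n) → EuclideanSpace ℂ (Fin n),
        DifferentiableOn ℂ g U →
        (∀ z ∈ ball (0 : EuclideanSpace ℂ (Fin n)) r, ‖g z - f z‖ < ε) →
        ¬ ∃ x ∈ ball (0 : EuclideanSpace ℂ (Fin n)) r,
            (∀ j < q, g^[j] x ∈ ball (0 : EuclideanSpace ℂ (Fin n)) r) ∧
            g^[q] x = x ∧ ∀ p : ℕ, 0 < p → p < q → g^[p] x ≠ x := by
  classical
  obtain ⟨r₀, hr₀pos, hball, hiter, hfix1, hfixq⟩ := hr0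
  haveI : NeZero q := ⟨by omega⟩
  have hqpos : 0 < q := by omega
  obtain ⟨d, hd0, hdlt, hdvd, hdfix⟩ := exists_proper_divisor_period Λ q hq hnoper
  obtain ⟨c, hc0, hcycle⟩ := cycle_defect_bound Λ q d hd0 hdvd hdfix
  set h : EuclideanSpace ℂ (Fin n) → EuclideanSpace ℂ (Fin n) := fun z => f z - Λ z with hhdef
  have hballU : ball (0 : EuclideanSpace ℂ (Fin n)) r₀ ⊆ U :=
    fun z hz => hball (ball_subset_closedBall hz)
  have hhd : DifferentiableOn ℂ h (ball 0 r₀) :=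
    (hf.mono hballU).sub (Λ.differentiable.differentiableOn)
  have hh0 : h 0 = 0 := by simp [hhdef, hf0]
  have hhD : HasFDerivAt h (0 : EuclideanSpace ℂ (Fin n) →L[ℂ] EuclideanSpace ℂ (Fin n)) 0 := by
    have hfd : HasFDerivAt f Λ 0 := by
      have := (hf.differentiableAt (hU.mem_nhds h0U)).hasFDerivAt
      rwa [← hΛ] at this
    have h2 := hfd.sub Λ.hasFDerivAt
    simpa [hhdef, Pi.sub_def] using h2
  have hhcont : ContinuousOn h (closedBall (0 : EuclideanSpace ℂ (Fin n)) r₀) :=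
    (hf.continuousOn.mono hball).sub Λ.continuous.continuousOn
  obtain ⟨M, hM⟩ := (isCompact_closedBall (0 : EuclideanSpace ℂ (Fin n)) r₀).exists_bound_of_continuousOn hhcont
  have hM0 : 0 ≤ M := le_trans (norm_nonneg _) (hM 0 (mem_closedBall_self hr₀pos.le))
  have hMball : ∀ z ∈ ball (0 : EuclideanSpace ℂ (Fin n)) r₀, ‖h z‖ ≤ M :=
    fun z hz => hM z (ball_subset_closedBall hz)
  have hquad := quad_bound hr₀pos hhd hh0 hhD hMball
  set A := M / r₀ ^ 2 with hAdef
  have hA0 : 0 ≤ A := by positivity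
  -- Lipschitz bound for h on small balls
  have hlip_h : ∀ σ : ℝ, 0 < σ → 3 * σ ≤ r₀ →
      ∀ x y : EuclideanSpace ℂ (Fin n), x ∈ closedBall 0 σ → y ∈ closedBall 0 σ →
      ‖h y - h x‖ ≤ 18 * A * σ * ‖y - x‖ := by
    intro σ hσ h3σ x y hx hy
    have hsub : ball (0 : EuclideanSpace ℂ (Fin n)) (3 * σ) ⊆ ball 0 r₀ := ball_subset_ball h3σ
    have hbd : ∀ z ∈ ball (0 : EuclideanSpace ℂ (Fin n)) (3 * σ), ‖h z‖ ≤ A * (3 * σ) ^ 2 := by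
      intro z hz
      have h1 := hquad z (hsub hz)
      have h2 : ‖z‖ ≤ 3 * σ := le_of_lt (mem_ball_zero_iff.mp hz)
      calc ‖h z‖ ≤ A * ‖z‖ ^ 2 := by rw [hAdef]; exact h1
        _ ≤ A * (3 * σ) ^ 2 := by
            apply mul_le_mul_of_nonneg_left _ hA0
            apply pow_le_pow_left₀ (norm_nonneg _) h2
    have := lip_of_bound hσ (hhd.mono hsub) hbd hx hy
    calc ‖h y - h x‖ ≤ 2 * (A * (3 * σ) ^ 2) / σ * ‖y - x‖ := this
      _ = 18 * A * σ * ‖y - x‖ := by field_simp; ring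
  -- choose r
  set r := min (r₀ / 6) (1 / (12 * c * (A + 1))) with hrdef
  have hrpos : 0 < r := lt_min (by positivity) (by positivity)
  have hr6 : 6 * r ≤ r₀ := by
    have := min_le_left (r₀ / 6) (1 / (12 * c * (A + 1)))
    rw [← hrdef] at this; linarith
  have hrr₀ : r ≤ r₀ := by linarith
  have hrA : 12 * c * (A + 1) * r ≤ 1 := by
    have h1 := min_le_right (r₀ / 6) (1 / (12 * c * (A + 1)))
    rw [← hrdef] at h1
    have h2 : (0:ℝ) < 12 * c * (A + 1) := by positivity
    calc 12 * c * (A + 1) * r ≤ 12 * c * (A + 1) * (1 / (12 * c * (A + 1))) := by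
          apply mul_le_mul_of_nonneg_left h1 h2.le
      _ = 1 := by field_simp
  -- Lipschitz constant for f on closedBall (2r)
  set L := ‖Λ‖ + 6 * M / r₀ with hLdef
  have hL0 : 0 ≤ L := by positivity
  have hlipf : ∀ x y : EuclideanSpace ℂ (Fin n), x ∈ closedBall 0 (2 * r) →
      y ∈ closedBall 0 (2 * r) → ‖f y - f x‖ ≤ L * ‖y - x‖ := by
    intro x y hx hy
    have h2r : 0 < 2 * r := by positivity
    have h6r : 3 * (2 * r) ≤ r₀ := by linarith
    have hh := hlip_h (2 * r) h2r h6r x y hx hy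
    have hfy : f y - f x = Λ (y - x) + (h y - h x) := by
      simp only [hhdef, map_sub]
      abel
    calc ‖f y - f x‖ = ‖Λ (y - x) + (h y - h x)‖ := by rw [hfy]
      _ ≤ ‖Λ (y - x)‖ + ‖h y - h x‖ := norm_add_le _ _
      _ ≤ ‖Λ‖ * ‖y - x‖ + 18 * A * (2 * r) * ‖y - x‖ := add_le_add (Λ.le_opNorm _) hh
      _ ≤ ‖Λ‖ * ‖y - x‖ + 6 * M / r₀ * ‖y - x‖ := by
          have : 18 * A * (2 * r) ≤ 6 * M / r₀ := by
            rw [hAdef]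
            have h1 : 36 * (M / r₀ ^ 2) * r ≤ 36 * (M / r₀ ^ 2) * (r₀ / 6) := by
              apply mul_le_mul_of_nonneg_left (by linarith) (by positivity)
            calc 18 * (M / r₀ ^ 2) * (2 * r) = 36 * (M / r₀ ^ 2) * r := by ring
              _ ≤ 36 * (M / r₀ ^ 2) * (r₀ / 6) := h1
              _ = 6 * M / r₀ := by field_simp; ring
          apply add_le_add_right
          apply mul_le_mul_of_nonneg_right this (norm_nonneg _)
      _ = L * ‖y - x‖ := by rw [hLdef]; ring
  set Cq := (L + 1) ^ q with hCqdef
  have hCq1 : 1 ≤ Cq := one_le_pow₀ (by linarith)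
  have hCq0 : 0 < Cq := by linarith
  -- continuity of iterates of f
  have hcont : ∀ j, j ≤ q → ContinuousOn (f^[j]) (closedBall (0 : EuclideanSpace ℂ (Fin n)) r₀) := by
    intro j hj
    induction j with
    | zero => simpa using continuousOn_id
    | succ j ih =>
      rw [Function.iterate_succ']
      exact ContinuousOn.comp hf.continuousOn (ih (by omega))
        (fun z hz => hiter z hz j (by omega))
  -- the annulus and δ
  set K : Set (EuclideanSpace ℂ (Fin n)) :=
    closedBall 0 r ∩ {y | r / 3 ≤ ‖y‖} with hKdef
  have hKsub : K ⊆ closedBall (0 : EuclideanSpace ℂ (Fin n)) r₀ :=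
    fun y hy => closedBall_subset_closedBall hrr₀ hy.1
  have hKcompact : IsCompact K := by
    apply (isCompact_closedBall _ _).inter_right
    exact isClosed_le continuous_const continuous_norm
  have hKne : K.Nonempty := by
    refine ⟨r • EuclideanSpace.single (⟨0, by omega⟩ : Fin n) (1 : ℂ), ?_, ?_⟩
    · rw [mem_closedBall_zero_iff, norm_smul, EuclideanSpace.norm_single]
      simp [abs_of_pos hrpos]
    · simp only [Set.mem_setOf_eq, norm_smul, EuclideanSpace.norm_single]
      rw [Real.norm_eq_abs, abs_of_pos hrpos]
      simp
      linarith
  obtain ⟨y₀, hy₀K, hy₀min⟩ := hKcompact.exists_isMinOn hKne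
    ((((hcont q le_rfl).mono hKsub).sub (continuousOn_id.mono (fun _ _ => trivial))).norm)
  set δ := ‖f^[q] y₀ - y₀‖ with hδdef
  have hδpos : 0 < δ := by
    rcases eq_or_lt_of_le (norm_nonneg (f^[q] y₀ - y₀)) with h0 | h
    · exfalso
      have hfp : f^[q] y₀ = y₀ := by
        have := h0.symm
        rwa [norm_eq_zero, sub_eq_zero] at this
      have := hfixq y₀ (hKsub hy₀K) hfp
      have h2 := hy₀K.2
      rw [this] at h2
      simp only [norm_zero, Set.mem_setOf_eq] at h2
      linarith
    · exact h
  -- choose ε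
  set ε := min (min (δ / (2 * Cq)) (r / Cq)) (r / (24 * c)) with hεdef
  have hεpos : 0 < ε := by
    apply lt_min (lt_min (by positivity) (by positivity)) (by positivity)
  have hεδ : Cq * ε ≤ δ / 2 := by
    have h1 : ε ≤ δ / (2 * Cq) := le_trans (min_le_left _ _) (min_le_left _ _)
    calc Cq * ε ≤ Cq * (δ / (2 * Cq)) := mul_le_mul_of_nonneg_left h1 hCq0.le
      _ = δ / 2 := by field_simp
  have hεr : Cq * ε ≤ r := by
    have h1 : ε ≤ r / Cq := le_trans (min_le_left _ _) (min_le_right _ _)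
    calc Cq * ε ≤ Cq * (r / Cq) := mul_le_mul_of_nonneg_left h1 hCq0.le
      _ = r := by field_simp
  have hεc : 24 * c * ε ≤ r := by
    have h1 : ε ≤ r / (24 * c) := min_le_right _ _
    calc 24 * c * ε ≤ 24 * c * (r / (24 * c)) := by
          apply mul_le_mul_of_nonneg_left h1 (by positivity)
      _ = r := by field_simp
  refine ⟨r, hrpos, le_trans (closedBall_subset_closedBall hrr₀) hball, ε, hεpos, ?_⟩
  intro g hg hgf
  rintro ⟨x, hxball, hxiter, hxq, hxmin⟩
  -- perturbation e
  set eg : EuclideanSpace ℂ (Fin n) → EuclideanSpace ℂ (Fin n) := fun z => g z - f z with hegdef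
  have hrU : ball (0 : EuclideanSpace ℂ (Fin n)) r ⊆ U :=
    fun z hz => hballU (ball_subset_ball (by linarith) hz)
  have hegd : DifferentiableOn ℂ eg (ball 0 r) := (hg.mono hrU).sub (hf.mono hrU)
  have hegb : ∀ z ∈ ball (0 : EuclideanSpace ℂ (Fin n)) r, ‖eg z‖ ≤ ε :=
    fun z hz => (hgf z hz).le
  -- Lipschitz bound for eg on closedBall (r/3)
  have hlip_e : ∀ a b : EuclideanSpace ℂ (Fin n), a ∈ closedBall 0 (r / 3) →
      b ∈ closedBall 0 (r / 3) → ‖eg b - eg a‖ ≤ 6 * ε / r * ‖b - a‖ := by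
    intro a b ha hb
    have h33 : 3 * (r / 3) = r := by ring
    have hr3 : 0 < r / 3 := by positivity
    have hd' : DifferentiableOn ℂ eg (ball 0 (3 * (r / 3))) := by rw [h33]; exact hegd
    have hb' : ∀ z ∈ ball (0 : EuclideanSpace ℂ (Fin n)) (3 * (r / 3)), ‖eg z‖ ≤ ε := by
      rw [h33]; exact hegb
    have := lip_of_bound hr3 hd' hb' ha hb
    calc ‖eg b - eg a‖ ≤ 2 * ε / (r / 3) * ‖b - a‖ := this
      _ = 6 * ε / r * ‖b - a‖ := by rw [div_div_eq_mul_div]; ring_nf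
  -- confinement: q-periodic points of g in ball r lie in ball (r/3)
  have hconf : ∀ y : EuclideanSpace ℂ (Fin n), y ∈ ball 0 r →
      (∀ j < q, g^[j] y ∈ ball (0 : EuclideanSpace ℂ (Fin n)) r) → g^[q] y = y → ‖y‖ < r / 3 := by
    intro y hy hyj hyq
    have hcomp : ∀ j, j ≤ q → ‖g^[j] y - f^[j] y‖ ≤ (L + 1) ^ j * ε ∧
        f^[j] y ∈ closedBall (0 : EuclideanSpace ℂ (Fin n)) (2 * r) := by
      intro j hj
      induction j with
      | zero =>
        constructor
        · simpa using (by positivity : (0:ℝ) ≤ 1 * ε)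
        · simp only [Function.iterate_zero, id_eq, mem_closedBall_zero_iff]
          have := mem_ball_zero_iff.mp hy
          linarith
      | succ j ih =>
        obtain ⟨ihd, ihm⟩ := ih (by omega)
        have hgj : g^[j] y ∈ ball (0 : EuclideanSpace ℂ (Fin n)) r := hyj j (by omega)
        have hgj2r : g^[j] y ∈ closedBall (0 : EuclideanSpace ℂ (Fin n)) (2 * r) := by
          rw [mem_closedBall_zero_iff]
          have := mem_ball_zero_iff.mp hgj
          linarith
        have hstep : ‖g^[j+1] y - f^[j+1] y‖ ≤ (L + 1) ^ (j + 1) * ε := by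
          rw [Function.iterate_succ_apply', Function.iterate_succ_apply']
          have h1 : ‖g (g^[j] y) - f (g^[j] y)‖ ≤ ε := hegb _ hgj
          have h2 : ‖f (g^[j] y) - f (f^[j] y)‖ ≤ L * ‖g^[j] y - f^[j] y‖ :=
            hlipf _ _ ihm hgj2r
          calc ‖g (g^[j] y) - f (f^[j] y)‖
              = ‖(g (g^[j] y) - f (g^[j] y)) + (f (g^[j] y) - f (f^[j] y))‖ := by
                congr 1; abel
            _ ≤ ‖g (g^[j] y) - f (g^[j] y)‖ + ‖f (g^[j] y) - f (f^[j] y)‖ := norm_add_le _ _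
            _ ≤ ε + L * ‖g^[j] y - f^[j] y‖ := add_le_add h1 h2
            _ ≤ ε + L * ((L + 1) ^ j * ε) := by
                apply add_le_add_right
                apply mul_le_mul_of_nonneg_left ihd hL0
            _ ≤ (L + 1) ^ (j + 1) * ε := by
                have hp1 : (1:ℝ) ≤ (L + 1) ^ j := one_le_pow₀ (by linarith)
                have : 1 + L * (L + 1) ^ j ≤ (L + 1) ^ (j + 1) := by
                  rw [pow_succ]
                  nlinarith
                nlinarith [hεpos.le]
        refine ⟨hstep, ?_⟩
        have hgj1 : g^[j+1] y ∈ closedBall (0 : EuclideanSpace ℂ (Fin n)) r := by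
          rcases lt_or_eq_of_le (by omega : j + 1 ≤ q) with hlt | heq
          · exact ball_subset_closedBall (hyj (j+1) hlt)
          · rw [heq, hyq]; exact ball_subset_closedBall hy
        rw [mem_closedBall_zero_iff]
        have htri : ‖f^[j+1] y‖ ≤ ‖g^[j+1] y‖ + ‖g^[j+1] y - f^[j+1] y‖ := by
          have := norm_sub_le (g^[j+1] y) (g^[j+1] y - f^[j+1] y)
          simpa using this
        have hpow : (L + 1) ^ (j+1) * ε ≤ Cq * ε := by
          apply mul_le_mul_of_nonneg_right _ hεpos.le
          rw [hCqdef]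
          exact pow_le_pow_right₀ (by linarith) (by omega)
        have h1 := mem_closedBall_zero_iff.mp hgj1
        linarith [hstep, hεr]
    have hfqy : ‖f^[q] y - y‖ < δ := by
      obtain ⟨hd', _⟩ := hcomp q le_rfl
      have : ‖f^[q] y - y‖ = ‖g^[q] y - f^[q] y‖ := by
        rw [hyq, norm_sub_rev]
      rw [this]
      have hpow : (L + 1) ^ q * ε ≤ Cq * ε := le_of_eq (by rw [hCqdef])
      calc ‖g^[q] y - f^[q] y‖ ≤ (L + 1) ^ q * ε := hd'
        _ ≤ Cq * ε := hpow
        _ ≤ δ / 2 := hεδ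
        _ < δ := by linarith
    by_contra hcon
    push_neg at hcon
    have hyK : y ∈ K := ⟨ball_subset_closedBall hy, hcon⟩
    have h3 : δ ≤ ‖f^[q] y - y‖ := isMinOn_iff.mp hy₀min y hyK
    linarith
  -- orbit points
  set xs : ℕ → EuclideanSpace ℂ (Fin n) := fun k => g^[k] x with hxsdef
  have hxs0 : xs 0 = x := rfl
  have hxsq : xs q = x := hxq
  have hxs_succ : ∀ k, xs (k + 1) = g (xs k) := by
    intro k; rw [hxsdef]; simp [Function.iterate_succ_apply']
  have hqs : ∀ s : ℕ, g^[q * s] x = x := by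
    intro s
    induction s with
    | zero => simp
    | succ s ih =>
      have : q * (s + 1) = q * s + q := by ring
      rw [this, Function.iterate_add_apply, hxq, ih]
  have hxmod : ∀ k, xs k = xs (k % q) := by
    intro k
    show g^[k] x = g^[k % q] x
    conv_lhs => rw [← Nat.div_add_mod k q]
    rw [Nat.add_comm, Function.iterate_add_apply, hqs]
  have hxcong : ∀ a b, a % q = b % q → xs a = xs b := by
    intro a b hab
    rw [hxmod a, hxmod b, hab]
  have horb_lt : ∀ j, j < q → ‖xs j‖ < r / 3 := by
    intro j hj
    apply hconf (xs j) (hxiter j hj)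
    · intro i hi
      have hidx : g^[i] (xs j) = xs ((i + j) % q) := by
        show g^[i] (g^[j] x) = xs ((i + j) % q)
        rw [← Function.iterate_add_apply]
        exact hxcong (i + j) ((i + j) % q) (Nat.mod_mod_of_dvd _ dvd_rfl).symm
      rw [hidx]
      exact hxiter ((i + j) % q) (Nat.mod_lt _ hqpos)
    · show g^[q] (g^[j] x) = g^[j] x
      rw [← Function.iterate_add_apply]
      exact hxcong (q + j) j (Nat.add_mod_left q j)
  have horbit : ∀ k, xs k ∈ closedBall (0 : EuclideanSpace ℂ (Fin n)) (r / 3) := by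
    intro k
    rw [hxmod k, mem_closedBall_zero_iff]
    exact (horb_lt (k % q) (Nat.mod_lt _ hqpos)).le
  -- the cycle-difference vector
  set w : Fin q → EuclideanSpace ℂ (Fin n) := fun i => xs (i.val + d) - xs i.val with hwdef
  -- telescoping sum condition
  have hTsum : ∑ j ∈ Finset.range (q / d), w ((j * d : ℕ) : Fin q) = 0 := by
    have hidx : ∀ j : ℕ, w ((j * d : ℕ) : Fin q) = xs ((j + 1) * d) - xs (j * d) := by
      intro j
      rw [hwdef]
      simp only [Fin.val_natCast]
      congr 1
      · exact hxcong (j * d % q + d) ((j + 1) * d)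
          (by rw [Nat.mod_add_mod, Nat.succ_mul])
      · exact hxcong (j * d % q) (j * d) (Nat.mod_mod_of_dvd _ dvd_rfl)
    calc ∑ j ∈ Finset.range (q / d), w ((j * d : ℕ) : Fin q)
        = ∑ j ∈ Finset.range (q / d), (xs ((j + 1) * d) - xs (j * d)) :=
          Finset.sum_congr rfl (fun j _ => hidx j)
      _ = xs ((q / d) * d) - xs (0 * d) := Finset.sum_range_sub (fun j => xs (j * d)) (q / d)
      _ = 0 := by
          rw [Nat.div_mul_cancel hdvd]
          simp only [Nat.zero_mul]
          rw [hxsq, hxs0, sub_self]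
  -- defect bound
  have hCw : ∀ i : Fin q, ‖w (i + 1) - Λ (w i)‖ ≤ (6 * A * r + 6 * ε / r) * ‖w‖ := by
    intro i
    have h1q : (1 : Fin q).val = 1 := by
      rw [Fin.val_one']
      exact Nat.mod_eq_of_lt (by omega)
    have hval : (i + 1 : Fin q).val = (i.val + 1) % q := by
      rw [Fin.add_def, h1q]
    have hw1 : w (i + 1) = xs (i.val + 1 + d) - xs (i.val + 1) := by
      rw [hwdef]
      simp only [hval]
      congr 1
      · exact hxcong ((i.val + 1) % q + d) (i.val + 1 + d) (Nat.mod_add_mod _ _ _)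
      · exact hxcong ((i.val + 1) % q) (i.val + 1) (Nat.mod_mod_of_dvd _ dvd_rfl)
    set a := xs (i.val + d) with hadef
    set b := xs i.val with hbdef
    have hga : xs (i.val + 1 + d) = g a := by
      rw [hadef]
      have : i.val + 1 + d = (i.val + d) + 1 := by ring
      rw [this, hxs_succ]
    have hgb : xs (i.val + 1) = g b := by rw [hbdef, hxs_succ]
    have hwi : w i = a - b := by rw [hwdef]
    have hsplit : w (i + 1) - Λ (w i) = (h a - h b) + (eg a - eg b) := by
      rw [hw1, hga, hgb, hwi, map_sub, hhdef, hegdef]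
      simp only
      abel
    have hamem : a ∈ closedBall (0 : EuclideanSpace ℂ (Fin n)) (r / 3) := horbit _
    have hbmem : b ∈ closedBall (0 : EuclideanSpace ℂ (Fin n)) (r / 3) := horbit _
    have hr3 : 0 < r / 3 := by positivity
    have h3r3 : 3 * (r / 3) ≤ r₀ := by linarith
    have hhl := hlip_h (r / 3) hr3 h3r3 b a hbmem hamem
    have hel := hlip_e b a hbmem hamem
    have hwiw : ‖a - b‖ ≤ ‖w‖ := by
      rw [← hwi]
      exact norm_le_pi_norm w i
    calc ‖w (i + 1) - Λ (w i)‖ = ‖(h a - h b) + (eg a - eg b)‖ := by rw [hsplit]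
      _ ≤ ‖h a - h b‖ + ‖eg a - eg b‖ := norm_add_le _ _
      _ ≤ 18 * A * (r / 3) * ‖a - b‖ + 6 * ε / r * ‖a - b‖ := add_le_add hhl hel
      _ = (6 * A * r + 6 * ε / r) * ‖a - b‖ := by ring
      _ ≤ (6 * A * r + 6 * ε / r) * ‖w‖ := by
          apply mul_le_mul_of_nonneg_left hwiw
          positivity
  -- assemble
  have hCnorm : ‖(fun i => w (i + 1) - Λ (w i) : Fin q → EuclideanSpace ℂ (Fin n))‖ ≤
      (6 * A * r + 6 * ε / r) * ‖w‖ := by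
    apply pi_norm_le_iff_of_nonneg (by positivity) |>.mpr
    exact hCw
  have hfinal : ‖w‖ ≤ (3 / 4 : ℝ) * ‖w‖ := by
    have h1 := hcycle w hTsum
    have h2 : c * ‖(fun i => w (i + 1) - Λ (w i) : Fin q → EuclideanSpace ℂ (Fin n))‖ ≤
        c * ((6 * A * r + 6 * ε / r) * ‖w‖) := mul_le_mul_of_nonneg_left hCnorm hc0.le
    have hk1 : c * (6 * A * r) ≤ 1 / 2 := by nlinarith
    have hk2 : c * (6 * ε / r) ≤ 1 / 4 := by
      have h6 : 6 * c * ε ≤ r / 4 := by linarith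
      calc c * (6 * ε / r) = (6 * c * ε) / r := by ring
        _ ≤ (r / 4) / r := by gcongr
        _ = 1 / 4 := by field_simp
    have hwnn : 0 ≤ ‖w‖ := norm_nonneg _
    calc ‖w‖ ≤ c * ((6 * A * r + 6 * ε / r) * ‖w‖) := le_trans h1 h2
      _ = (c * (6 * A * r) + c * (6 * ε / r)) * ‖w‖ := by ring
      _ ≤ (3 / 4 : ℝ) * ‖w‖ := by nlinarith
  have hw0 : ‖w‖ = 0 := by linarith [norm_nonneg w]
  have hxd : g^[d] x = x := by
    have : w ⟨0, hqpos⟩ = 0 := by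
      have := norm_eq_zero.mp hw0
      rw [this]; rfl
    rw [hwdef] at this
    simp only at this
    have hxsd : xs (0 + d) - xs 0 = 0 := this
    rw [Nat.zero_add, hxs0] at hxsd
    have := sub_eq_zero.mp hxsd
    exact this
  exact hxmin d hd0 hdlt hxd
end

section
/- Let n ≥ 1, let U ⊆ ℂ^n be open with 0 ∈ U, and let f : ℂ^n → ℂ^n be holomorphic on U with f(0) = 0 and derivative Λ = Df(0) at 0. Assume 0 is an isolated fixed point of f, i.e. there is r₀ > 0 with B̄(0, r₀) ⊆ U on which 0 is the unique fixed point of f. Then the following are equivalent: (i) 1 is an eigenvalue of Λ, i.e. there exists v ≠ 0 with Λv = v; (ii) for every r > 0 such that B̄(0, r) ⊆ U and 0 is the unique fixed point of f in B̄(0, r), and for every ε > 0, there exists a map g : ℂ^n → ℂ^n holomorphic on U with sup_{z ∈ B(0,r)} ‖g(z) − f(z)‖ < ε which has at least two distinct fixed points in B(0, r). -/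
open Metric


/-- Schwarz-lemma based Lipschitz estimate: a holomorphic map on a ball that is uniformly
small is Lipschitz with small constant on the quarter ball. -/
lemma schwarz_lip {E F : Type*} [NormedAddCommGroup E] [NormedSpace ℂ E]
    [NormedAddCommGroup F] [NormedSpace ℂ F]
    {φ : E → F} {ρ M : ℝ} (hρ : 0 < ρ)
    (hd : DifferentiableOn ℂ φ (ball 0 ρ))
    (hb : ∀ x ∈ ball (0:E) ρ, ‖φ x‖ < M) :
    ∀ z ∈ ball (0:E) (ρ/4), ∀ w ∈ ball (0:E) (ρ/4),
      ‖φ z - φ w‖ ≤ 4 * M / ρ * ‖z - w‖ := by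
  intro z hz w hw
  rcases eq_or_ne z w with rfl | hzw
  · simp
  have hd0 : 0 < ‖z - w‖ := norm_sub_pos_iff.2 hzw
  set d := ‖z - w‖ with hdd
  set R : ℝ := (ρ/2)/d with hR
  have hRpos : 0 < R := div_pos (by linarith) hd0
  set L : ℂ → E := fun t => w + t • (z - w) with hL
  rw [mem_ball_zero_iff] at hz hw
  have hdlt : d < ρ/2 := by
    calc d ≤ ‖z‖ + ‖w‖ := norm_sub_le _ _
    _ < ρ/2 := by linarith
  have hLmem : ∀ t ∈ ball (0:ℂ) R, L t ∈ ball (0:E) ρ := by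
    intro t ht
    rw [mem_ball_zero_iff] at ht ⊢
    have : ‖t‖ * d < ρ/2 := by
      have := (mul_lt_mul_of_pos_right ht hd0)
      rwa [hR, div_mul_cancel₀ _ hd0.ne'] at this
    calc ‖L t‖ ≤ ‖w‖ + ‖t‖ * d := by
          simpa [hL, norm_smul] using norm_add_le w (t • (z - w))
    _ < ρ := by linarith
  have hdiff : DifferentiableOn ℂ (φ ∘ L) (ball 0 R) := by
    refine hd.comp ?_ hLmem
    exact (Differentiable.differentiableOn (by
      exact (differentiable_const w).add ((differentiable_id).smul_const (z - w))))
  have hwρ : w ∈ ball (0:E) ρ := by rw [mem_ball_zero_iff]; linarith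
  have hL0 : L 0 = w := by simp [hL]
  have hmaps : Set.MapsTo (φ ∘ L) (ball 0 R) (ball ((φ ∘ L) 0) (2 * M)) := by
    intro t ht
    rw [mem_ball, dist_eq_norm]
    calc ‖(φ ∘ L) t - (φ ∘ L) 0‖ ≤ ‖φ (L t)‖ + ‖φ (L 0)‖ := norm_sub_le _ _
    _ < M + M := add_lt_add (hb _ (hLmem t ht)) (by rw [hL0]; exact hb _ hwρ)
    _ = 2 * M := by ring
  have h1 : (1:ℂ) ∈ ball (0:ℂ) R := by
    rw [mem_ball_zero_iff, norm_one, hR, lt_div_iff₀ hd0, one_mul]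
    exact hdlt
  have key := Complex.dist_le_div_mul_dist_of_mapsTo_ball hdiff (hmaps.mono_right ball_subset_closedBall) h1
  have hL1 : L 1 = z := by simp [hL]
  rw [Function.comp_apply, Function.comp_apply, hL1, hL0, dist_eq_norm, dist_eq_norm,
    sub_zero, norm_one, mul_one] at key
  calc ‖φ z - φ w‖ ≤ 2 * M / R := key
  _ = 4 * M / ρ * d := by
      rw [hR]; field_simp; ring
  _ = 4 * M / ρ * ‖z - w‖ := rfl


set_option maxHeartbeats 1000000 in
/-- The `q = 1` case of Theorem 1.2: for a holomorphic germ `f` fixing `0`,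
with `0` an isolated fixed point, `1` is an eigenvalue of `Λ = Df(0)` if and
only if for every isolating closed ball `B̄(0, r) ⊆ U` and every `ε > 0` there
is a holomorphic map `g` on `U`, `ε`-close to `f` on `B(0, r)`, having at
least two distinct fixed points in `B(0, r)`. -/
theorem stmt_13 (n : ℕ) (hn : 1 ≤ n)
    (U : Set (EuclideanSpace ℂ (Fin n))) (hU : IsOpen U) (h0U : (0 : EuclideanSpace ℂ (Fin n)) ∈ U)
    (f : EuclideanSpace ℂ (Fin n) → EuclideanSpace ℂ (Fin n))
    (hf : DifferentiableOn ℂ f U) (hf0 : f 0 = 0)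
    (Λ : EuclideanSpace ℂ (Fin n) →L[ℂ] EuclideanSpace ℂ (Fin n)) (hΛ : Λ = fderiv ℂ f 0)
    (hiso : ∃ r₀ > (0 : ℝ), closedBall (0 : EuclideanSpace ℂ (Fin n)) r₀ ⊆ U ∧
      ∀ x ∈ closedBall (0 : EuclideanSpace ℂ (Fin n)) r₀, f x = x → x = 0) :
    (∃ v : EuclideanSpace ℂ (Fin n), v ≠ 0 ∧ Λ v = v) ↔
      (∀ r > (0 : ℝ), closedBall (0 : EuclideanSpace ℂ (Fin n)) r ⊆ U →
        (∀ x ∈ closedBall (0 : EuclideanSpace ℂ (Fin n)) r, f x = x → x = 0) →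
        ∀ ε > (0 : ℝ), ∃ g : EuclideanSpace ℂ (Fin n) → EuclideanSpace ℂ (Fin n),
          DifferentiableOn ℂ g U ∧
          (∀ z ∈ ball (0 : EuclideanSpace ℂ (Fin n)) r, ‖g z - f z‖ < ε) ∧
          ∃ x ∈ ball (0 : EuclideanSpace ℂ (Fin n)) r,
            ∃ y ∈ ball (0 : EuclideanSpace ℂ (Fin n)) r,
              x ≠ y ∧ g x = x ∧ g y = y) := by
  constructor
  · intro hv
    obtain ⟨v, hv0, hΛv⟩ := hv
    intro r hr hrU hisol ε hε
    have hvn : 0 < ‖v‖ := norm_pos_iff.2 hv0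
    have hfd : HasFDerivAt f Λ 0 := by
      rw [hΛ]
      exact (hf.differentiableAt (hU.mem_nhds h0U)).hasFDerivAt
    set A : EuclideanSpace ℂ (Fin n) →L[ℂ] EuclideanSpace ℂ (Fin n) :=
      ContinuousLinearMap.id ℂ _ - Λ with hA
    have hh : HasFDerivAt (fun z => z - f z) A 0 := (hasFDerivAt_id 0).sub hfd
    have hAv : A v = 0 := by
      simp [hA, ContinuousLinearMap.sub_apply, hΛv]
    have hs : HasDerivAt (fun t : ℂ => t • v) v 0 := by
      simpa using (hasDerivAt_id (0:ℂ)).smul_const v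
    set ψ : ℂ → EuclideanSpace ℂ (Fin n) := fun t => t • v - f (t • v) with hψdef
    have hψ : HasDerivAt ψ 0 0 := by
      have h00 : HasFDerivAt (fun z => z - f z) A ((fun t : ℂ => t • v) 0) := by
        simpa using hh
      have := h00.comp_hasDerivAt (0:ℂ) hs
      rw [hAv] at this
      exact this
    have hlo : (fun t : ℂ => ψ t) =o[nhds (0:ℂ)] fun t => t := by
      have := hψ.hasFDerivAt.isLittleO
      simpa [hψdef, hf0] using this
    set c : ℝ := ε * ‖v‖ / (2 * r) with hc
    have hcpos : 0 < c := by positivity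
    have hev : ∀ᶠ t : ℂ in nhds 0, ‖ψ t‖ ≤ c * ‖t‖ := by
      simpa using hlo.def hcpos
    rw [Metric.eventually_nhds_iff] at hev
    obtain ⟨η, hη, hball⟩ := hev
    set t : ℝ := min (η/2) (r/(2*‖v‖)) with ht
    have htpos : 0 < t := lt_min (by linarith) (by positivity)
    have htη : ‖(t:ℂ)‖ < η := by
      rw [Complex.norm_real, Real.norm_eq_abs, abs_of_pos htpos]
      calc t ≤ η/2 := min_le_left _ _
      _ < η := by linarith
    have hsmall : ‖ψ (t:ℂ)‖ ≤ c * t := by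
      have := hball (y := (t:ℂ)) (by rwa [dist_zero_right])
      rwa [Complex.norm_real, Real.norm_eq_abs, abs_of_pos htpos] at this
    set a : EuclideanSpace ℂ (Fin n) := (t:ℂ) • v with ha
    have hanorm : ‖a‖ = t * ‖v‖ := by
      rw [ha, norm_smul, Complex.norm_real, Real.norm_eq_abs, abs_of_pos htpos]
    have hapos : 0 < ‖a‖ := by rw [hanorm]; positivity
    have har : ‖a‖ < r := by
      rw [hanorm]
      calc t * ‖v‖ ≤ (r/(2*‖v‖)) * ‖v‖ :=
            mul_le_mul_of_nonneg_right (min_le_right _ _) hvn.le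
      _ = r/2 := by field_simp
      _ < r := by linarith
    have ha0 : a ≠ 0 := smul_ne_zero (by exact_mod_cast htpos.ne') hv0
    set g : EuclideanSpace ℂ (Fin n) → EuclideanSpace ℂ (Fin n) :=
      fun z => f z + ((innerSL ℂ a) z / (‖a‖:ℂ)^2) • (a - f a) with hg
    have hC0 : ((‖a‖:ℂ))^2 ≠ 0 := pow_ne_zero 2 (Complex.ofReal_ne_zero.2 hapos.ne')
    refine ⟨g, ?_, ?_, a, by rwa [mem_ball_zero_iff], 0, by simpa using hr, ha0, ?_, ?_⟩
    · rw [hg]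
      have hd0 : Differentiable ℂ (fun z : EuclideanSpace ℂ (Fin n) => (innerSL ℂ a) z) :=
        (innerSL ℂ a).differentiable
      have hd1 : Differentiable ℂ
          (fun z : EuclideanSpace ℂ (Fin n) => ((innerSL ℂ a) z / (‖a‖:ℂ)^2) • (a - f a)) := by
        fun_prop
      exact hf.add hd1.differentiableOn
    · intro z hz
      rw [mem_ball_zero_iff] at hz
      have heq : g z - f z = ((innerSL ℂ a) z / (‖a‖:ℂ)^2) • (a - f a) := by
        rw [hg]; exact add_sub_cancel_left _ _
      have hafa : a - f a = ψ (t:ℂ) := rfl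
      have hinner : ‖(innerSL ℂ a) z‖ ≤ ‖a‖ * ‖z‖ := norm_inner_le_norm a z
      have hψnn : (0:ℝ) ≤ ‖ψ (t:ℂ)‖ := norm_nonneg _
      rw [heq, hafa, norm_smul, norm_div, norm_pow, Complex.norm_real,
        Real.norm_eq_abs, abs_of_pos hapos]
      calc ‖(innerSL ℂ a) z‖ / ‖a‖^2 * ‖ψ (t:ℂ)‖
          ≤ (‖a‖ * ‖z‖) / ‖a‖^2 * (c * t) := by gcongr
      _ = ‖z‖ * (c * t / ‖a‖) := by field_simp
      _ ≤ r * (c * t / ‖a‖) := mul_le_mul_of_nonneg_right hz.le (by positivity)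
      _ = ε/2 := by rw [hanorm, hc]; field_simp
      _ < ε := by linarith
    · have hinner_aa : (innerSL ℂ a) a = ((‖a‖:ℂ))^2 := by
        simp only [innerSL_apply_apply]
        rw [inner_self_eq_norm_sq_to_K]
        norm_cast
      rw [hg]
      simp only [hinner_aa, div_self hC0, one_smul]
      abel
    · rw [hg]
      simp [hf0]
  · intro hRHS
    by_contra hno
    push_neg at hno
    obtain ⟨r₀, hr₀, hr₀U, hr₀iso⟩ := hiso
    have hfd : HasFDerivAt f Λ 0 := by
      rw [hΛ]
      exact (hf.differentiableAt (hU.mem_nhds h0U)).hasFDerivAt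
    set A : EuclideanSpace ℂ (Fin n) →L[ℂ] EuclideanSpace ℂ (Fin n) :=
      ContinuousLinearMap.id ℂ _ - Λ with hAdef
    have hAapp : ∀ u, A u = u - Λ u := by
      intro u
      simp [hAdef, ContinuousLinearMap.sub_apply]
    -- A is injective, hence a linear equivalence
    have hinj : Function.Injective (A : EuclideanSpace ℂ (Fin n) → EuclideanSpace ℂ (Fin n)) := by
      rw [← ContinuousLinearMap.coe_coe A]
      rw [injective_iff_map_eq_zero]
      intro x hx
      by_contra hx0
      exact hno x hx0 (by
        have : x - Λ x = 0 := hx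
        linear_combination (norm := module) -this)
    have hsurj : Function.Surjective ((A : EuclideanSpace ℂ (Fin n) →ₗ[ℂ] EuclideanSpace ℂ (Fin n))) :=
      LinearMap.injective_iff_surjective.1 hinj
    obtain ⟨K, hKpos, hKbound⟩ :
        ∃ K : ℝ, 0 < K ∧ ∀ u : EuclideanSpace ℂ (Fin n), ‖u‖ ≤ K * ‖A u‖ := by
      set e : EuclideanSpace ℂ (Fin n) ≃L[ℂ] EuclideanSpace ℂ (Fin n) :=
        (LinearEquiv.ofBijective (A : EuclideanSpace ℂ (Fin n) →ₗ[ℂ] EuclideanSpace ℂ (Fin n))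
          ⟨hinj, hsurj⟩).toContinuousLinearEquiv with he
      refine ⟨‖(e.symm : EuclideanSpace ℂ (Fin n) →L[ℂ] EuclideanSpace ℂ (Fin n))‖ + 1,
        by positivity, ?_⟩
      intro u
      have h1 : e.symm (A u) = u := by
        have h0 : e u = A u := by
          rw [he]
          rw [show ((LinearEquiv.ofBijective
              (A : EuclideanSpace ℂ (Fin n) →ₗ[ℂ] EuclideanSpace ℂ (Fin n))
              ⟨hinj, hsurj⟩).toContinuousLinearEquiv : EuclideanSpace ℂ (Fin n) →
                EuclideanSpace ℂ (Fin n)) =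
            ((LinearEquiv.ofBijective
              (A : EuclideanSpace ℂ (Fin n) →ₗ[ℂ] EuclideanSpace ℂ (Fin n)) ⟨hinj, hsurj⟩) :
              EuclideanSpace ℂ (Fin n) → EuclideanSpace ℂ (Fin n)) from
            LinearEquiv.coe_toContinuousLinearEquiv' _]
          rfl
        rw [← h0, ContinuousLinearEquiv.symm_apply_apply]
      calc ‖u‖ = ‖e.symm (A u)‖ := by rw [h1]
      _ ≤ ‖(e.symm : EuclideanSpace ℂ (Fin n) →L[ℂ] EuclideanSpace ℂ (Fin n))‖ * ‖A u‖ :=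
          (e.symm : EuclideanSpace ℂ (Fin n) →L[ℂ] EuclideanSpace ℂ (Fin n)).le_opNorm _
      _ ≤ (‖(e.symm : EuclideanSpace ℂ (Fin n) →L[ℂ] EuclideanSpace ℂ (Fin n))‖ + 1) * ‖A u‖ := by
          apply mul_le_mul_of_nonneg_right _ (norm_nonneg _)
          linarith
    -- φ := Λ - f has zero derivative at 0
    set φ : EuclideanSpace ℂ (Fin n) → EuclideanSpace ℂ (Fin n) := fun z => Λ z - f z with hφdef
    have hφd : HasFDerivAt φ (0 : EuclideanSpace ℂ (Fin n) →L[ℂ] EuclideanSpace ℂ (Fin n)) 0 := by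
      have := (Λ.hasFDerivAt (x := 0)).sub hfd
      rwa [sub_self] at this
    set c : ℝ := 1/(16*K) with hc
    have hcpos : 0 < c := by positivity
    have hev : ∀ᶠ x : EuclideanSpace ℂ (Fin n) in nhds 0, ‖φ x‖ ≤ c * ‖x‖ := by
      have hlo := hφd.isLittleO
      have := hlo.def hcpos
      simpa [hφdef, hf0, Λ.map_zero] using this
    rw [Metric.eventually_nhds_iff] at hev
    obtain ⟨η, hη, hball⟩ := hev
    set δ : ℝ := min η r₀ with hδ
    have hδpos : 0 < δ := lt_min hη hr₀
    have hδU : ball (0 : EuclideanSpace ℂ (Fin n)) δ ⊆ U :=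
      (ball_subset_closedBall.trans (closedBall_subset_closedBall (min_le_right _ _))).trans hr₀U
    have hφb : ∀ x ∈ ball (0:EuclideanSpace ℂ (Fin n)) δ, ‖φ x‖ < 2*c*δ := by
      intro x hx
      rw [mem_ball_zero_iff] at hx
      have h1 : ‖φ x‖ ≤ c * ‖x‖ := hball (by
        rw [dist_zero_right]
        exact lt_of_lt_of_le hx (min_le_left _ _))
      have h2 : c * ‖x‖ < c * δ := by
        exact mul_lt_mul_of_pos_left hx hcpos
      nlinarith [mul_pos hcpos hδpos]
    have hφdiff : DifferentiableOn ℂ φ (ball 0 δ) :=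
      (Λ.differentiable.differentiableOn).sub (hf.mono hδU)
    have hφlip := schwarz_lip hδpos hφdiff hφb
    have h8 : 4*(2*c*δ)/δ = 8*c := by field_simp; ring
    have hexp : ∀ z ∈ ball (0:EuclideanSpace ℂ (Fin n)) (δ/4),
        ∀ w ∈ ball (0:EuclideanSpace ℂ (Fin n)) (δ/4),
        ‖z - w‖ ≤ 2*K*‖(z - f z) - (w - f w)‖ := by
      intro z hz w hw
      have hl := hφlip z hz w hw
      rw [h8] at hl
      have hA1 : A (z - w) = ((z - f z) - (w - f w)) - (φ z - φ w) := by
        rw [hAapp, Λ.map_sub]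
        simp only [hφdef]
        abel
      have h2 : ‖A (z - w)‖ ≤ ‖(z - f z) - (w - f w)‖ + 8*c*‖z - w‖ := by
        rw [hA1]
        refine (norm_sub_le _ _).trans ?_
        gcongr
      have h3 := hKbound (z - w)
      have h4 : K*(8*c) = 1/2 := by rw [hc]; field_simp; ring
      have h5 : K*‖A (z - w)‖ ≤ K*‖(z - f z) - (w - f w)‖ + K*(8*c)*‖z - w‖ := by
        calc K*‖A (z - w)‖ ≤ K*(‖(z - f z) - (w - f w)‖ + 8*c*‖z - w‖) :=
              mul_le_mul_of_nonneg_left h2 hKpos.le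
        _ = K*‖(z - f z) - (w - f w)‖ + K*(8*c)*‖z - w‖ := by ring
      rw [h4] at h5
      have h6 : 2*K*‖(z - f z) - (w - f w)‖ = 2*(K*‖(z - f z) - (w - f w)‖) := by ring
      linarith
    set ρ : ℝ := δ/4 with hρ
    have hρpos : 0 < ρ := by positivity
    have hρr₀ : ρ ≤ r₀ := le_trans (by rw [hρ]; linarith) (min_le_right η r₀)
    have hsubU : closedBall (0:EuclideanSpace ℂ (Fin n)) ρ ⊆ U :=
      (closedBall_subset_closedBall hρr₀).trans hr₀U
    set ε : ℝ := ρ/(16*K) with hε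
    have hεpos : 0 < ε := by positivity
    obtain ⟨g, hgd, hgb, x, hx, y, hy, hxy, hgx, hgy⟩ :=
      hRHS ρ hρpos hsubU
        (fun x hx hfx => hr₀iso x (closedBall_subset_closedBall hρr₀ hx) hfx) ε hεpos
    set u : EuclideanSpace ℂ (Fin n) → EuclideanSpace ℂ (Fin n) := fun z => g z - f z with hu
    have hud : DifferentiableOn ℂ u (ball 0 ρ) :=
      (hgd.sub hf).mono (ball_subset_closedBall.trans hsubU)
    have hub : ∀ z ∈ ball (0:EuclideanSpace ℂ (Fin n)) ρ, ‖u z‖ < ε := hgb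
    have hulip := schwarz_lip hρpos hud hub
    have h0ρ : (0:EuclideanSpace ℂ (Fin n)) ∈ ball (0:EuclideanSpace ℂ (Fin n)) ρ :=
      mem_ball_self hρpos
    have hux : u x = x - f x := by rw [hu]; simp only [hgx]
    have huy : u y = y - f y := by rw [hu]; simp only [hgy]
    -- locate the fixed points in the quarter ball
    have hloc : ∀ z ∈ ball (0:EuclideanSpace ℂ (Fin n)) ρ, u z = z - f z →
        z ∈ ball (0:EuclideanSpace ℂ (Fin n)) (ρ/4) := by
      intro z hz huz
      have h1 := hexp z hz 0 h0ρ
      rw [hf0] at h1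
      simp only [sub_zero] at h1
      rw [← huz] at h1
      have h2 : ‖u z‖ < ε := hub z hz
      have h3 : ‖z‖ < 2*K*ε := by
        calc ‖z‖ ≤ 2*K*‖u z‖ := h1
        _ < 2*K*ε := by
          apply mul_lt_mul_of_pos_left h2 (by positivity)
      rw [mem_ball_zero_iff]
      have h4 : 2*K*ε = ρ/8 := by rw [hε]; field_simp; ring
      rw [h4] at h3
      linarith
    have hxq := hloc x hx hux
    have hyq := hloc y hy huy
    have hul := hulip x hxq y hyq
    have hexy := hexp x hx y hy
    rw [← hux, ← huy] at hexy
    have hhalf : 2*K*(4*ε/ρ) = 1/2 := by rw [hε]; field_simp; ring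
    have : ‖x - y‖ ≤ (1/2) * ‖x - y‖ := by
      calc ‖x - y‖ ≤ 2*K*‖u x - u y‖ := hexy
      _ ≤ 2*K*(4*ε/ρ*‖x - y‖) := by gcongr
      _ = (1/2) * ‖x - y‖ := by rw [← mul_assoc, hhalf]
    have hzero : ‖x - y‖ ≤ 0 := by linarith
    exact hxy (by
      have := norm_sub_eq_zero_iff.1 (le_antisymm hzero (norm_nonneg _))
      exact this)
end
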